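/- arXiv:1106.4368 — 4 statements merged into one kernel-verified Lean document; each statement's English description precedes it below -/
import Mathlib

section
/- Let T₁, T₂ > 0 and let μ : ℝ → ℝ be C¹ and nonnegative with μ integrable on (0,∞). Suppose β : ℝ² → ℝ is C³ and periodic with periods T₁, T₂ (β(x + Tᵢeᵢ) = β(x) for all x and i = 1,2), and suppose that for every x ∈ ℝ², −Δβ(x) = 1 − ∫_{ℝ²} μ(|v|²/2 − β(x)) dv. Then ∇β ≡ 0; i.e. β is constant, so the electric field E₀ = −∇β vanishes identically. -/
open MeasureTheory Real

/-- The Laplacian of `β : ℝ² → ℝ`, as the sum of second partial derivatives. -/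
noncomputable def lap2 (β : EuclideanSpace ℝ (Fin 2) → ℝ) (x : EuclideanSpace ℝ (Fin 2)) : ℝ :=
  ∑ i : Fin 2, iteratedFDeriv ℝ 2 β x ![EuclideanSpace.single i 1, EuclideanSpace.single i 1]

namespace BGKAux

open Complex Set

local notation "E2" => EuclideanSpace ℝ (Fin 2)

lemma vol_ball2 (r : ℝ) (hr : 0 ≤ r) :
    volume (Metric.ball (0 : E2) r) = ENNReal.ofReal (π * r^2) := by
  rw [EuclideanSpace.volume_ball]
  simp only [Fintype.card_fin]
  rw [show ((2:ℕ):ℝ)/2 + 1 = 2 by norm_num, Real.Gamma_two, sq_sqrt pi_nonneg]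
  rw [← ENNReal.ofReal_pow hr, ← ENNReal.ofReal_mul (by positivity), div_one, mul_comm]

lemma vol_closedBall2 (r : ℝ) (hr : 0 ≤ r) :
    volume (Metric.closedBall (0 : E2) r) = ENNReal.ofReal (π * r^2) := by
  rw [EuclideanSpace.volume_closedBall]
  simp only [Fintype.card_fin]
  rw [show ((2:ℕ):ℝ)/2 + 1 = 2 by norm_num, Real.Gamma_two, sq_sqrt pi_nonneg]
  rw [← ENNReal.ofReal_pow hr, ← ENNReal.ofReal_mul (by positivity), div_one, mul_comm]

lemma vol_q_Ioo (a b : ℝ) :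
    volume ((fun v : E2 => ‖v‖ ^ 2 / 2) ⁻¹' Set.Ioo a b)
      = ENNReal.ofReal (2 * π) * volume (Set.Ioo a b ∩ Set.Ioi 0) := by
  rcases le_or_gt b 0 with hb | hb
  · have h1 : (fun v : E2 => ‖v‖ ^ 2 / 2) ⁻¹' Set.Ioo a b = ∅ := by
      ext v
      simp only [mem_preimage, mem_Ioo, mem_empty_iff_false, iff_false, not_and]
      intro _
      have : (0:ℝ) ≤ ‖v‖^2/2 := by positivity
      linarith
    have h2 : Set.Ioo a b ∩ Set.Ioi 0 = ∅ := by
      ext x; simp only [mem_inter_iff, mem_Ioo, mem_Ioi, mem_empty_iff_false, iff_false, not_and]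
      rintro ⟨_, h⟩; intro hx; linarith
    rw [h1, h2]; simp
  rcases lt_or_ge a 0 with ha | ha
  · have h1 : (fun v : E2 => ‖v‖ ^ 2 / 2) ⁻¹' Set.Ioo a b = Metric.ball 0 (Real.sqrt (2*b)) := by
      ext v
      have hv : (0:ℝ) ≤ ‖v‖^2/2 := by positivity
      simp only [mem_preimage, mem_Ioo, Metric.mem_ball, dist_zero_right]
      constructor
      · rintro ⟨_, h⟩
        have : ‖v‖^2 < 2*b := by linarith
        calc ‖v‖ = Real.sqrt (‖v‖^2) := (Real.sqrt_sq (norm_nonneg v)).symm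
          _ < Real.sqrt (2*b) := Real.sqrt_lt_sqrt (by positivity) this
      · intro h
        have h2 : ‖v‖^2 < Real.sqrt (2*b) ^ 2 := by
          apply pow_lt_pow_left₀ h (norm_nonneg v) (by norm_num)
        rw [Real.sq_sqrt (by linarith)] at h2
        exact ⟨by linarith, by linarith⟩
    have h2 : Set.Ioo a b ∩ Set.Ioi 0 = Set.Ioo 0 b := by
      ext x; simp only [mem_inter_iff, mem_Ioo, mem_Ioi]
      constructor
      · rintro ⟨⟨_, h⟩, hx⟩; exact ⟨hx, h⟩
      · rintro ⟨hx, h⟩; exact ⟨⟨by linarith, h⟩, hx⟩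
    rw [h1, h2, vol_ball2 _ (Real.sqrt_nonneg _), Real.sq_sqrt (by linarith), Real.volume_Ioo,
      ← ENNReal.ofReal_mul (by positivity)]
    ring_nf
  · rcases le_or_gt b a with hba | hba
    · rw [Set.Ioo_eq_empty (by intro h; exact absurd h (not_lt.mpr hba))]
      simp
    have h1 : (fun v : E2 => ‖v‖ ^ 2 / 2) ⁻¹' Set.Ioo a b
        = Metric.ball 0 (Real.sqrt (2*b)) \ Metric.closedBall 0 (Real.sqrt (2*a)) := by
      ext v
      simp only [mem_preimage, mem_Ioo, mem_diff, Metric.mem_ball, Metric.mem_closedBall,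
        dist_zero_right, not_le]
      constructor
      · rintro ⟨h1, h2⟩
        constructor
        · calc ‖v‖ = Real.sqrt (‖v‖^2) := (Real.sqrt_sq (norm_nonneg v)).symm
            _ < Real.sqrt (2*b) := Real.sqrt_lt_sqrt (by positivity) (by linarith)
        · calc Real.sqrt (2*a) < Real.sqrt (‖v‖^2) :=
              Real.sqrt_lt_sqrt (by positivity) (by linarith)
            _ = ‖v‖ := Real.sqrt_sq (norm_nonneg v)
      · rintro ⟨h1, h2⟩
        have hb2 : ‖v‖^2 < Real.sqrt (2*b) ^ 2 :=
          pow_lt_pow_left₀ h1 (norm_nonneg v) (by norm_num)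
        rw [Real.sq_sqrt (by linarith)] at hb2
        have ha2 : Real.sqrt (2*a) ^ 2 < ‖v‖^2 :=
          pow_lt_pow_left₀ h2 (Real.sqrt_nonneg _) (by norm_num)
        rw [Real.sq_sqrt (by linarith)] at ha2
        exact ⟨by linarith, by linarith⟩
    have hsub : Metric.closedBall (0:E2) (Real.sqrt (2*a)) ⊆ Metric.ball 0 (Real.sqrt (2*b)) :=
      Metric.closedBall_subset_ball (Real.sqrt_lt_sqrt (by linarith) (by linarith))
    have h2 : Set.Ioo a b ∩ Set.Ioi 0 = Set.Ioo a b := by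
      apply Set.inter_eq_left.mpr
      intro x hx; exact lt_of_le_of_lt ha hx.1
    rw [h1, h2, measure_diff hsub measurableSet_closedBall.nullMeasurableSet
        (by rw [vol_closedBall2 _ (Real.sqrt_nonneg _)]; exact ENNReal.ofReal_ne_top),
      vol_ball2 _ (Real.sqrt_nonneg _), vol_closedBall2 _ (Real.sqrt_nonneg _),
      Real.sq_sqrt (by linarith), Real.sq_sqrt (by linarith), Real.volume_Ioo,
      ← ENNReal.ofReal_sub _ (by positivity), ← ENNReal.ofReal_mul (by positivity)]
    ring_nf

lemma q_continuous : Continuous (fun v : E2 => ‖v‖ ^ 2 / 2) := by fun_prop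

lemma map_q_vol :
    Measure.map (fun v : E2 => ‖v‖ ^ 2 / 2) volume
      = ENNReal.ofReal (2 * π) • ((volume : Measure ℝ).restrict (Set.Ioi 0)) := by
  have hqm : Measurable (fun v : E2 => ‖v‖ ^ 2 / 2) := q_continuous.measurable
  have hloc : IsLocallyFiniteMeasure (Measure.map (fun v : E2 => ‖v‖ ^ 2 / 2) volume) := by
    constructor
    intro x
    refine ⟨Set.Ioo (x - 1) (x + 1), Ioo_mem_nhds (by linarith) (by linarith), ?_⟩
    rw [Measure.map_apply hqm measurableSet_Ioo, vol_q_Ioo]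
    exact ENNReal.mul_lt_top ENNReal.ofReal_lt_top
      (lt_of_le_of_lt (measure_mono Set.inter_subset_left) (by rw [Real.volume_Ioo]; exact ENNReal.ofReal_lt_top))
  refine Real.measure_ext_Ioo_rat (fun p q => ?_)
  rw [Measure.map_apply hqm measurableSet_Ioo, vol_q_Ioo, Measure.smul_apply, smul_eq_mul,
    Measure.restrict_apply measurableSet_Ioo]

lemma integral_radial {μ : ℝ → ℝ} (hμc : Continuous μ) (c : ℝ) :
    ∫ v : E2, μ (‖v‖ ^ 2 / 2 - c) = (2 * π) * ∫ s in Set.Ioi (-c : ℝ), μ s := by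
  have h1 : ∫ s, μ (s - c) ∂(Measure.map (fun v : E2 => ‖v‖ ^ 2 / 2) volume)
      = ∫ v : E2, μ (‖v‖ ^ 2 / 2 - c) :=
    integral_map q_continuous.aemeasurable
      ((hμc.comp (continuous_id.sub continuous_const)).aestronglyMeasurable)
  rw [← h1, map_q_vol, integral_smul_measure, ENNReal.toReal_ofReal (by positivity), smul_eq_mul]
  congr 1
  have hemb : MeasurableEmbedding (fun x : ℝ => x + -c) :=
    (Homeomorph.addRight (-c)).measurableEmbedding
  have hmap : Measure.map (fun x : ℝ => x + -c) (volume : Measure ℝ) = volume :=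
    map_add_right_eq_self volume (-c)
  have key := hemb.setIntegral_map (μ := (volume : Measure ℝ)) μ (Set.Ioi (-c : ℝ))
  rw [hmap] at key
  have hpre : (fun x : ℝ => x + -c) ⁻¹' Set.Ioi (-c) = Set.Ioi 0 := by
    ext x; simp only [mem_preimage, mem_Ioi]; constructor <;> intro h <;> linarith
  rw [key, hpre]
  exact setIntegral_congr_fun measurableSet_Ioi (fun x _ => by ring_nf)

lemma integrableOn_Ioi_all {μ : ℝ → ℝ} (hμc : Continuous μ)
    (hμint : IntegrableOn μ (Set.Ioi (0:ℝ))) (c : ℝ) : IntegrableOn μ (Set.Ioi c) := by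
  rcases le_or_gt 0 c with hc | hc
  · exact hμint.mono_set (Set.Ioi_subset_Ioi hc)
  · rw [← Set.Ioc_union_Ioi_eq_Ioi hc.le]
    exact (hμc.integrableOn_Ioc).union hμint

lemma second_deriv_test {φ : ℝ → ℝ} (hφ : ContDiff ℝ 2 φ) (hmax : ∀ t, φ t ≤ φ 0) :
    deriv (deriv φ) 0 ≤ 0 := by
  by_contra hpos
  push_neg at hpos
  have hsplit := (contDiff_succ_iff_deriv (n := 1)).mp hφ
  have hφ' : ContDiff ℝ 1 (deriv φ) := hsplit.2.2
  have hφd : Differentiable ℝ φ := hsplit.1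
  have h0 : deriv φ 0 = 0 :=
    (IsLocalMax.deriv_eq_zero (Filter.Eventually.of_forall hmax))
  have hd : HasDerivAt (deriv φ) (deriv (deriv φ) 0) 0 :=
    (hφ'.differentiable one_ne_zero 0).hasDerivAt
  have hslope : Filter.Tendsto (slope (deriv φ) 0) (nhdsWithin 0 {0}ᶜ)
      (nhds (deriv (deriv φ) 0)) := hasDerivAt_iff_tendsto_slope.mp hd
  have hev : ∀ᶠ t in nhdsWithin 0 {0}ᶜ, 0 < slope (deriv φ) 0 t :=
    hslope.eventually (eventually_gt_nhds hpos)
  have hev2 : ∀ᶠ t in nhdsWithin (0:ℝ) (Set.Ioi 0), 0 < slope (deriv φ) 0 t :=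
    nhdsWithin_mono 0 (fun x (hx : x ∈ Set.Ioi 0) => ne_of_gt hx) hev
  obtain ⟨δ, hδ, hδp⟩ := mem_nhdsGT_iff_exists_Ioo_subset.mp hev2
  rw [Set.mem_Ioi] at hδ
  have hderivpos : ∀ t ∈ Set.Ioo (0:ℝ) δ, 0 < deriv φ t := by
    intro t ht
    have hs := hδp ht
    simp only [Set.mem_setOf_eq, slope_def_field, h0, sub_zero] at hs
    have := hs
    rw [div_pos_iff] at this
    rcases this with ⟨h1, _⟩ | ⟨_, h2⟩
    · exact h1
    · exact absurd ht.1 (not_lt.mpr h2.le)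
  have hmono : StrictMonoOn φ (Set.Icc 0 (δ/2)) := by
    apply strictMonoOn_of_deriv_pos (convex_Icc _ _) (hφd.continuous.continuousOn)
    intro x hx
    rw [interior_Icc] at hx
    exact hderivpos x ⟨hx.1, by linarith [hx.2]⟩
  have : φ 0 < φ (δ/2) :=
    hmono (Set.left_mem_Icc.mpr (by linarith)) (Set.right_mem_Icc.mpr (by linarith)) (by linarith)
  exact absurd (hmax (δ/2)) (not_le.mpr this)

noncomputable def Phi : ℂ ≃ₗᵢ[ℝ] EuclideanSpace ℝ (Fin 2) :=
  Complex.isometryOfOrthonormal (EuclideanSpace.basisFun (Fin 2) ℝ)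

noncomputable def PhiL : ℂ →L[ℝ] EuclideanSpace ℝ (Fin 2) :=
  Phi.toLinearIsometry.toContinuousLinearMap

lemma PhiL_apply (z : ℂ) : PhiL z = Phi z := rfl

lemma Phi_one : Phi 1 = EuclideanSpace.single (0 : Fin 2) (1:ℝ) := by
  rw [Phi, Complex.isometryOfOrthonormal_apply]
  simp [EuclideanSpace.basisFun_apply]

lemma Phi_I : Phi Complex.I = EuclideanSpace.single (1 : Fin 2) (1:ℝ) := by
  rw [Phi, Complex.isometryOfOrthonormal_apply]
  simp [EuclideanSpace.basisFun_apply]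

-- decomposition of ℝ-linear maps on ℂ
lemma clm_decomp {M : Type*} [NormedAddCommGroup M] [NormedSpace ℝ M]
    (L : ℂ →L[ℝ] M) (z : ℂ) : L z = z.re • L 1 + z.im • L Complex.I := by
  have hz : z.re • (1:ℂ) + z.im • Complex.I = z := by
    simp [Complex.real_smul, Complex.re_add_im]
  rw [← _root_.map_smul L, ← _root_.map_smul L, ← map_add, hz]

-- line derivative
lemma hasDerivAt_line {b : ℂ → ℝ} (hb : Differentiable ℝ b) (z v : ℂ) (t : ℝ) :
    HasDerivAt (fun s : ℝ => b (z + s • v)) (fderiv ℝ b (z + t • v) v) t := by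
  have hA : HasDerivAt (fun s : ℝ => z + s • v) v t := by
    simpa using ((hasDerivAt_id t).smul_const v).const_add z
  exact (hb _).hasFDerivAt.comp_hasDerivAt t hA



lemma deriv2_line {b : ℂ → ℝ} (hb : ContDiff ℝ 3 b) (z v : ℂ) :
    deriv (deriv (fun s : ℝ => b (z + s • v))) 0 = fderiv ℝ (fderiv ℝ b) z v v := by
  have hb1 : Differentiable ℝ b := hb.differentiable (by norm_num)
  have hDf : ContDiff ℝ 2 (fderiv ℝ b) := hb.fderiv_right (by norm_num)
  set G : ℂ → ℝ := fun ζ => fderiv ℝ b ζ v with hGdef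
  have hGeq : G = fun ζ => (ContinuousLinearMap.apply ℝ ℝ v) (fderiv ℝ b ζ) := rfl
  have hG : Differentiable ℝ G := by
    rw [hGeq]
    exact (ContinuousLinearMap.apply ℝ ℝ v).differentiable.comp
      (hDf.differentiable two_ne_zero)
  have hφ' : deriv (fun s : ℝ => b (z + s • v)) = fun s : ℝ => G (z + s • v) :=
    funext fun t => (hasDerivAt_line hb1 z v t).deriv
  rw [hφ']
  have h2 : deriv (fun s : ℝ => G (z + s • v)) 0 = fderiv ℝ G (z + (0:ℝ) • v) v :=
    (hasDerivAt_line hG z v 0).deriv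
  rw [h2]
  have h3 : fderiv ℝ G z = (ContinuousLinearMap.apply ℝ ℝ v).comp (fderiv ℝ (fderiv ℝ b) z) := by
    rw [hGeq]
    exact ((ContinuousLinearMap.apply ℝ ℝ v).hasFDerivAt.comp z
      (hDf.differentiable two_ne_zero z).hasFDerivAt).fderiv
  simp only [zero_smul, add_zero, h3, ContinuousLinearMap.coe_comp', Function.comp_apply,
    ContinuousLinearMap.apply_apply]

lemma lap2_transfer {β : EuclideanSpace ℝ (Fin 2) → ℝ} (hβ : ContDiff ℝ 3 β) (z : ℂ) :
    lap2 β (Phi z) = fderiv ℝ (fderiv ℝ (β ∘ PhiL)) z 1 1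
      + fderiv ℝ (fderiv ℝ (β ∘ PhiL)) z Complex.I Complex.I := by
  have h := PhiL.iteratedFDeriv_comp_right hβ (x := z) (i := 2) (by norm_num)
  have key : ∀ v : ℂ, iteratedFDeriv ℝ 2 β (Phi z) ![Phi v, Phi v]
      = fderiv ℝ (fderiv ℝ (β ∘ PhiL)) z v v := by
    intro v
    have h2 : iteratedFDeriv ℝ 2 (β ∘ PhiL) z ![v, v]
        = iteratedFDeriv ℝ 2 β (PhiL z) (fun i => PhiL (![v, v] i)) := by
      rw [h]; rfl
    have h3 : (fun i : Fin 2 => PhiL (![v, v] i)) = ![Phi v, Phi v] := by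
      funext i; fin_cases i <;> simp [PhiL_apply]
    rw [← PhiL_apply, ← h3, ← h2, iteratedFDeriv_two_apply]
    simp
  rw [lap2, Fin.sum_univ_two, ← Phi_one, ← Phi_I, key 1, key Complex.I]



lemma fderiv_eval {b : ℂ → ℝ} (hb : ContDiff ℝ 3 b) (v z : ℂ) :
    HasFDerivAt (fun ζ => fderiv ℝ b ζ v)
      ((ContinuousLinearMap.apply ℝ ℝ v).comp (fderiv ℝ (fderiv ℝ b) z)) z := by
  have hDf : ContDiff ℝ 2 (fderiv ℝ b) := hb.fderiv_right (by norm_num)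
  exact (ContinuousLinearMap.apply ℝ ℝ v).hasFDerivAt.comp z
      (hDf.differentiable two_ne_zero z).hasFDerivAt

lemma holomorphic_of_harmonic {b : ℂ → ℝ} (hb : ContDiff ℝ 3 b)
    (hharm : ∀ z, fderiv ℝ (fderiv ℝ b) z 1 1 + fderiv ℝ (fderiv ℝ b) z Complex.I Complex.I = 0) :
    Differentiable ℂ (fun z => (fderiv ℝ b z 1 : ℂ) + (fderiv ℝ b z Complex.I) • (-Complex.I)) := by
  intro z
  set A := fderiv ℝ (fderiv ℝ b) z with hA
  set L : ℂ →L[ℝ] ℂ :=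
    ((ContinuousLinearMap.apply ℝ ℝ (1:ℂ)).comp A).smulRight (1:ℂ)
      + ((ContinuousLinearMap.apply ℝ ℝ Complex.I).comp A).smulRight (-Complex.I) with hL
  have hreal : HasFDerivAt
      (fun z => (fderiv ℝ b z 1 : ℂ) + (fderiv ℝ b z Complex.I) • (-Complex.I)) L z := by
    have h1 : HasFDerivAt (fun ζ => ((fderiv ℝ b ζ 1 : ℝ) : ℂ))
        (((ContinuousLinearMap.apply ℝ ℝ (1:ℂ)).comp A).smulRight (1:ℂ)) z := by
      have := (fderiv_eval hb 1 z).smul_const (1:ℂ)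
      simpa [Complex.real_smul] using this
    have h2 : HasFDerivAt (fun ζ => (fderiv ℝ b ζ Complex.I) • (-Complex.I))
        (((ContinuousLinearMap.apply ℝ ℝ Complex.I).comp A).smulRight (-Complex.I)) z :=
      (fderiv_eval hb Complex.I z).smul_const (-Complex.I)
    exact h1.add h2
  -- symmetry of the second derivative
  have hsymm : A 1 Complex.I = A Complex.I 1 := by
    have hb1 : Differentiable ℝ b := hb.differentiable (by norm_num)
    have hDf : ContDiff ℝ 2 (fderiv ℝ b) := hb.fderiv_right (by norm_num)
    exact (second_derivative_symmetric (fun y => (hb1 y).hasFDerivAt)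
      ((hDf.differentiable two_ne_zero z).hasFDerivAt) 1 Complex.I)
  set c : ℂ := (A 1 1 : ℂ) - (A 1 Complex.I : ℂ) * Complex.I with hc
  set g' : ℂ →L[ℂ] ℂ := c • ContinuousLinearMap.id ℂ ℂ with hg'
  have hres : g'.restrictScalars ℝ = L := by
    refine ContinuousLinearMap.ext fun ξ => ?_
    rw [clm_decomp (g'.restrictScalars ℝ) ξ, clm_decomp L ξ]
    have e1 : (g'.restrictScalars ℝ) 1 = c := by
      simp [hg']
    have eI : (g'.restrictScalars ℝ) Complex.I = c * Complex.I := by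
      simp [hg', mul_comm]
    have f1 : L 1 = c := by
      simp only [hL, ContinuousLinearMap.add_apply, ContinuousLinearMap.smulRight_apply,
        ContinuousLinearMap.coe_comp', Function.comp_apply, ContinuousLinearMap.apply_apply, hc]
      simp only [Complex.real_smul, Complex.I_sq]
      ring
    have fI : L Complex.I = c * Complex.I := by
      simp only [hL, ContinuousLinearMap.add_apply, ContinuousLinearMap.smulRight_apply,
        ContinuousLinearMap.coe_comp', Function.comp_apply, ContinuousLinearMap.apply_apply, hc]
      have hAII : A Complex.I Complex.I = -(A 1 1) := by
        have := hharm z; rw [← hA] at this; linarith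
      rw [hAII, ← hsymm]
      simp only [Complex.real_smul]
      push_cast
      linear_combination ((A 1 Complex.I : ℝ) : ℂ) * Complex.I_sq
    rw [e1, eI, f1, fI]
  exact (hasFDerivAt_of_restrictScalars ℝ hreal hres).differentiableAt

lemma reduce {α : Type*} {T₁ T₂ : ℝ} (hT₁ : 0 < T₁) (hT₂ : 0 < T₂) (F : ℂ → α)
    (h1 : ∀ z, F (z + (T₁:ℂ)) = F z) (h2 : ∀ z, F (z + (T₂:ℂ) * Complex.I) = F z) (z : ℂ) :
    ∃ z', (z'.re ∈ Set.Icc 0 T₁ ∧ z'.im ∈ Set.Icc 0 T₂) ∧ F z' = F z := by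
  have p1 : Function.Periodic F (T₁:ℂ) := h1
  have p2 : Function.Periodic F ((T₂:ℂ) * Complex.I) := h2
  set n₁ : ℤ := ⌊z.re / T₁⌋ with hn₁
  set n₂ : ℤ := ⌊z.im / T₂⌋ with hn₂
  refine ⟨z - n₁ * (T₁:ℂ) - n₂ * ((T₂:ℂ) * Complex.I), ⟨?_, ?_⟩, ?_⟩
  · have hre : (z - n₁ * (T₁:ℂ) - n₂ * ((T₂:ℂ) * Complex.I)).re = z.re - n₁ * T₁ := by
      simp
    rw [hre]
    exact ⟨Int.sub_floor_div_mul_nonneg z.re hT₁, (Int.sub_floor_div_mul_lt z.re hT₁).le⟩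
  · have him : (z - n₁ * (T₁:ℂ) - n₂ * ((T₂:ℂ) * Complex.I)).im = z.im - n₂ * T₂ := by
      simp
    rw [him]
    exact ⟨Int.sub_floor_div_mul_nonneg z.im hT₂, (Int.sub_floor_div_mul_lt z.im hT₂).le⟩
  · rw [p2.sub_int_mul_eq n₂, p1.sub_int_mul_eq n₁]

lemma exists_global_max {b : ℂ → ℝ} (hb : Continuous b) {T₁ T₂ : ℝ}
    (hT₁ : 0 < T₁) (hT₂ : 0 < T₂)
    (h1 : ∀ z, b (z + (T₁:ℂ)) = b z) (h2 : ∀ z, b (z + (T₂:ℂ) * Complex.I) = b z) :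
    ∃ z₀, ∀ z, b z ≤ b z₀ := by
  set K : Set ℂ := {z | z.re ∈ Set.Icc 0 T₁ ∧ z.im ∈ Set.Icc 0 T₂} with hK
  have hKclosed : IsClosed K := by
    have : K = Complex.re ⁻¹' (Set.Icc 0 T₁) ∩ Complex.im ⁻¹' (Set.Icc 0 T₂) := rfl
    rw [this]
    exact (isClosed_Icc.preimage Complex.continuous_re).inter
      (isClosed_Icc.preimage Complex.continuous_im)
  have hKbdd : Bornology.IsBounded K := by
    apply Bornology.IsBounded.subset (Metric.isBounded_closedBall (x := (0:ℂ)) (r := T₁ + T₂))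
    intro z hz
    simp only [Metric.mem_closedBall, dist_zero_right]
    calc ‖z‖ ≤ |z.re| + |z.im| := Complex.norm_le_abs_re_add_abs_im z
      _ ≤ T₁ + T₂ := by
          rcases hz with ⟨⟨ha, hb'⟩, ⟨hc, hd⟩⟩
          rw [_root_.abs_of_nonneg ha, _root_.abs_of_nonneg hc]
          exact add_le_add hb' hd
  have hKcomp : IsCompact K := Metric.isCompact_of_isClosed_isBounded hKclosed hKbdd
  have hKne : K.Nonempty := ⟨0, by constructor <;> constructor <;> simp [hT₁.le, hT₂.le]⟩
  obtain ⟨z₀, _, hmax⟩ := hKcomp.exists_isMaxOn hKne hb.continuousOn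
  refine ⟨z₀, fun z => ?_⟩
  obtain ⟨z', hz'K, hz'⟩ := reduce hT₁ hT₂ b h1 h2 z
  rw [← hz']
  exact hmax hz'K


lemma fderiv_periodic {b : ℂ → ℝ} (hb : Differentiable ℝ b) {c : ℂ}
    (hper : ∀ ζ, b (ζ + c) = b ζ) (z : ℂ) : fderiv ℝ b (z + c) = fderiv ℝ b z := by
  have h : b = fun ζ => b (ζ + c) := funext fun ζ => (hper ζ).symm
  have h2 : HasFDerivAt (fun ζ => b (ζ + c)) (fderiv ℝ b (z + c)) z :=
    (hb (z + c)).hasFDerivAt.comp z ((hasFDerivAt_id z).add_const c)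
  conv_rhs => rw [h]
  rw [h2.fderiv]

lemma bounded_range_of_periodic {f : ℂ → ℂ} (hf : Continuous f) {T₁ T₂ : ℝ}
    (hT₁ : 0 < T₁) (hT₂ : 0 < T₂)
    (h1 : ∀ z, f (z + (T₁:ℂ)) = f z) (h2 : ∀ z, f (z + (T₂:ℂ) * Complex.I) = f z) :
    Bornology.IsBounded (Set.range f) := by
  set K : Set ℂ := {z | z.re ∈ Set.Icc 0 T₁ ∧ z.im ∈ Set.Icc 0 T₂} with hK
  have hKclosed : IsClosed K :=
    (isClosed_Icc.preimage Complex.continuous_re).inter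
      (isClosed_Icc.preimage Complex.continuous_im)
  have hKbdd : Bornology.IsBounded K := by
    apply Bornology.IsBounded.subset (Metric.isBounded_closedBall (x := (0:ℂ)) (r := T₁ + T₂))
    intro z hz
    simp only [Metric.mem_closedBall, dist_zero_right]
    calc ‖z‖ ≤ |z.re| + |z.im| := Complex.norm_le_abs_re_add_abs_im z
      _ ≤ T₁ + T₂ := by
          rcases hz with ⟨⟨ha, hb'⟩, ⟨hc, hd⟩⟩
          rw [_root_.abs_of_nonneg ha, _root_.abs_of_nonneg hc]
          exact add_le_add hb' hd
  have hKcomp : IsCompact K := Metric.isCompact_of_isClosed_isBounded hKclosed hKbdd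
  apply Bornology.IsBounded.subset ((hKcomp.image hf).isBounded)
  rintro y ⟨z, rfl⟩
  obtain ⟨z', hz'K, hz'⟩ := reduce hT₁ hT₂ f h1 h2 z
  exact ⟨z', hz'K, hz'⟩

end BGKAux

/-- Non-existence of genuinely 2D BGK waves: if `μ : ℝ → ℝ` is `C¹`, nonnegative and
integrable on `(0,∞)`, `β : ℝ² → ℝ` is `C³`, periodic with periods `T₁, T₂`, and satisfies
`−Δβ(x) = 1 − ∫_{ℝ²} μ(|v|²/2 − β(x)) dv` for all `x`, then `∇β ≡ 0`. -/
theorem stmt_0 (T₁ T₂ : ℝ) (hT₁ : 0 < T₁) (hT₂ : 0 < T₂)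
    (μ : ℝ → ℝ) (hμreg : ContDiff ℝ 1 μ) (hμpos : ∀ s, 0 ≤ μ s)
    (hμint : IntegrableOn μ (Set.Ioi (0 : ℝ)))
    (β : EuclideanSpace ℝ (Fin 2) → ℝ) (hβ : ContDiff ℝ 3 β)
    (hper1 : ∀ x, β (x + T₁ • EuclideanSpace.single (0 : Fin 2) (1 : ℝ)) = β x)
    (hper2 : ∀ x, β (x + T₂ • EuclideanSpace.single (1 : Fin 2) (1 : ℝ)) = β x)
    (hPoisson : ∀ x, -lap2 β x = 1 - ∫ v : EuclideanSpace ℝ (Fin 2), μ (‖v‖ ^ 2 / 2 - β x)) :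
    ∀ x, gradient β x = 0 := by
  classical
  open BGKAux Complex in
  have hμc : Continuous μ := hμreg.continuous
  set b : ℂ → ℝ := β ∘ BGKAux.PhiL with hbdef
  have hbsmooth : ContDiff ℝ 3 b := hβ.comp BGKAux.PhiL.contDiff
  have hbdiff : Differentiable ℝ b := hbsmooth.differentiable (by norm_num)
  -- periodicity of b
  have hPhiT1 : BGKAux.PhiL (T₁ : ℂ) = T₁ • EuclideanSpace.single (0 : Fin 2) (1:ℝ) := by
    rw [BGKAux.PhiL_apply]
    have : (T₁ : ℂ) = T₁ • (1 : ℂ) := by simp [Complex.real_smul]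
    rw [this, _root_.map_smul, BGKAux.Phi_one]
  have hPhiT2 : BGKAux.PhiL ((T₂ : ℂ) * Complex.I) = T₂ • EuclideanSpace.single (1 : Fin 2) (1:ℝ) := by
    rw [BGKAux.PhiL_apply]
    have : (T₂ : ℂ) * Complex.I = T₂ • Complex.I := by simp [Complex.real_smul]
    rw [this, _root_.map_smul, BGKAux.Phi_I]
  have hbper1 : ∀ z, b (z + (T₁:ℂ)) = b z := by
    intro z
    show β (BGKAux.PhiL (z + (T₁:ℂ))) = β (BGKAux.PhiL z)
    rw [map_add, hPhiT1]
    exact hper1 (BGKAux.PhiL z)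
  have hbper2 : ∀ z, b (z + (T₂:ℂ) * Complex.I) = b z := by
    intro z
    show β (BGKAux.PhiL (z + (T₂:ℂ) * Complex.I)) = β (BGKAux.PhiL z)
    rw [map_add, hPhiT2]
    exact hper2 (BGKAux.PhiL z)
  -- the Poisson equation in terms of b
  set G : ℝ → ℝ := fun c => (2 * π) * ∫ s in Set.Ioi (-c : ℝ), μ s with hGdef
  have hPb : ∀ z, lap2 β (BGKAux.Phi z) = G (b z) - 1 := by
    intro z
    have h := hPoisson (BGKAux.Phi z)
    rw [BGKAux.integral_radial hμc (β (BGKAux.Phi z))] at h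
    have hbz : β (BGKAux.Phi z) = b z := rfl
    rw [hbz] at h
    simp only [hGdef]
    linarith
  have hGmono : ∀ {c d : ℝ}, c ≤ d → G c ≤ G d := by
    intro c d h
    apply mul_le_mul_of_nonneg_left _ (by positivity)
    apply setIntegral_mono_set (BGKAux.integrableOn_Ioi_all hμc hμint (-d))
      (Filter.Eventually.of_forall fun x => hμpos x)
      (HasSubset.Subset.eventuallyLE (Set.Ioi_subset_Ioi (neg_le_neg h)))
  -- second derivative of slices
  have hslice_cd : ∀ (z v : ℂ), ContDiff ℝ 2 (fun t : ℝ => b (z + t • v)) := by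
    intro z v
    exact (hbsmooth.of_le (by norm_num)).comp
      (contDiff_const.add (contDiff_id.smul contDiff_const))
  -- max point
  obtain ⟨z₀, hmax⟩ := BGKAux.exists_global_max hbsmooth.continuous hT₁ hT₂ hbper1 hbper2
  obtain ⟨z₁, hmin⟩ := BGKAux.exists_global_max (hbsmooth.continuous.neg) hT₁ hT₂
    (fun z => by simp [hbper1 z]) (fun z => by simp [hbper2 z])
  have hmin' : ∀ z, b z₁ ≤ b z := by
    intro z; have := hmin z; simp only [Pi.neg_apply] at this ⊢; linarith
  -- at max: second derivatives ≤ 0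
  have hmax2 : ∀ v : ℂ, fderiv ℝ (fderiv ℝ b) z₀ v v ≤ 0 := by
    intro v
    rw [← BGKAux.deriv2_line hbsmooth z₀ v]
    apply BGKAux.second_deriv_test (hslice_cd z₀ v)
    intro t
    simpa using hmax (z₀ + t • v)
  have hmin2 : ∀ v : ℂ, 0 ≤ fderiv ℝ (fderiv ℝ b) z₁ v v := by
    intro v
    have h := BGKAux.second_deriv_test (φ := fun t : ℝ => -(b (z₁ + t • v)))
      ((hslice_cd z₁ v).neg) (fun t => by simpa using hmin' (z₁ + t • v))
    have hd : deriv (deriv (fun t : ℝ => -(b (z₁ + t • v)))) 0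
        = -(deriv (deriv (fun t : ℝ => b (z₁ + t • v))) 0) := by
      have e2 : deriv (fun t : ℝ => -(b (z₁ + t • v)))
          = fun t => -(deriv (fun s : ℝ => b (z₁ + s • v)) t) := funext fun t => deriv.neg
      rw [e2]
      exact deriv.neg
    rw [hd] at h
    rw [← BGKAux.deriv2_line hbsmooth z₁ v]
    linarith
  -- squeeze : G ∘ b ≡ 1 and harmonicity
  have hGmax : G (b z₀) ≤ 1 := by
    have := hPb z₀
    rw [BGKAux.lap2_transfer hβ z₀] at this
    have h1 := hmax2 1
    have h2 := hmax2 Complex.I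
    rw [hbdef] at *
    linarith [this]
  have hGmin : 1 ≤ G (b z₁) := by
    have := hPb z₁
    rw [BGKAux.lap2_transfer hβ z₁] at this
    have h1 := hmin2 1
    have h2 := hmin2 Complex.I
    linarith [this]
  have hG1 : ∀ z, G (b z) = 1 := by
    intro z
    have hle : b z₁ ≤ b z := hmin' z
    have hge : b z ≤ b z₀ := hmax z
    have h01 : G (b z₁) ≤ G (b z) := hGmono hle
    have h02 : G (b z) ≤ G (b z₀) := hGmono hge
    linarith
  have hharm : ∀ z, fderiv ℝ (fderiv ℝ b) z 1 1
      + fderiv ℝ (fderiv ℝ b) z Complex.I Complex.I = 0 := by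
    intro z
    have := hPb z
    rw [BGKAux.lap2_transfer hβ z, hG1 z] at this
    linarith
  -- holomorphic bounded function
  set f : ℂ → ℂ := fun z => ((fderiv ℝ b z 1 : ℝ) : ℂ) + (fderiv ℝ b z Complex.I) • (-Complex.I)
    with hfdef
  have hf : Differentiable ℂ f := BGKAux.holomorphic_of_harmonic hbsmooth hharm
  have hfper1 : ∀ z, f (z + (T₁:ℂ)) = f z := by
    intro z
    simp only [hfdef, BGKAux.fderiv_periodic hbdiff hbper1 z]
  have hfper2 : ∀ z, f (z + (T₂:ℂ) * Complex.I) = f z := by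
    intro z
    simp only [hfdef, BGKAux.fderiv_periodic hbdiff hbper2 z]
  have hbd : Bornology.IsBounded (Set.range f) :=
    BGKAux.bounded_range_of_periodic hf.continuous hT₁ hT₂ hfper1 hfper2
  have hconst : ∀ z, f z = f 0 := fun z => hf.apply_eq_apply_of_bounded hbd z 0
  -- extract that the partial derivatives are constant
  have hre : ∀ z, fderiv ℝ b z 1 = fderiv ℝ b 0 1 := by
    intro z
    have := congrArg Complex.re (hconst z)
    simpa [hfdef, Complex.real_smul] using this
  have him : ∀ z, fderiv ℝ b z Complex.I = fderiv ℝ b 0 Complex.I := by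
    intro z
    have := congrArg Complex.im (hconst z)
    simpa [hfdef, Complex.real_smul] using this
  -- FTC along the periods: the constants are zero
  have hzero : ∀ (v : ℂ) (T : ℝ), 0 < T → b ((T:ℝ) • v) = b 0 →
      (∀ z, fderiv ℝ b z v = fderiv ℝ b 0 v) → fderiv ℝ b 0 v = 0 := by
    intro v T hT hper hcv
    set c : ℝ := fderiv ℝ b 0 v with hc
    set φ : ℝ → ℝ := fun t => b ((t:ℝ) • v) - c * t with hφ
    have hd : ∀ t : ℝ, HasDerivAt φ 0 t := by
      intro t
      have h1 : HasDerivAt (fun t : ℝ => b ((t:ℝ) • v)) (fderiv ℝ b ((0:ℂ) + t • v) v) t := by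
        have := BGKAux.hasDerivAt_line hbdiff 0 v t
        simpa using this
      have h2 : HasDerivAt (fun t : ℝ => c * t) c t := by
        simpa using (hasDerivAt_id t).const_mul c
      have h3 := h1.sub h2
      rw [zero_add, hcv (t • v)] at h3
      rw [sub_self] at h3; exact h3
    have hφc : φ T = φ 0 := is_const_of_deriv_eq_zero
      (fun t => (hd t).differentiableAt) (fun t => (hd t).deriv) T 0
    have : b ((T:ℝ) • v) - c * T = b ((0:ℝ) • v) - c * 0 := hφc
    rw [hper, zero_smul] at this
    have hcT : c * T = 0 := by linarith
    have := mul_eq_zero.mp hcT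
    rcases this with h | h
    · exact h
    · exact absurd h (ne_of_gt hT)
  -- apply to the two directions
  have hone : fderiv ℝ b 0 1 = 0 := by
    apply hzero 1 T₁ hT₁
    · have : (T₁:ℝ) • (1:ℂ) = ((0:ℂ) + (T₁:ℂ)) := by simp [Complex.real_smul]
      rw [this, hbper1 0]
    · exact hre
  have hI : fderiv ℝ b 0 Complex.I = 0 := by
    apply hzero Complex.I T₂ hT₂
    · have : (T₂:ℝ) • Complex.I = ((0:ℂ) + (T₂:ℂ) * Complex.I) := by simp [Complex.real_smul]
      rw [this, hbper2 0]
    · exact him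
  have hfb : ∀ z, fderiv ℝ b z = 0 := by
    intro z
    refine ContinuousLinearMap.ext fun ξ => ?_
    rw [BGKAux.clm_decomp (fderiv ℝ b z) ξ, hre z, him z, hone, hI]
    simp
  -- transfer to β
  intro x
  set PhiLsymm : EuclideanSpace ℝ (Fin 2) →L[ℝ] ℂ :=
    BGKAux.Phi.symm.toLinearIsometry.toContinuousLinearMap with hPs
  have hβeq : β = fun y => b (PhiLsymm y) := by
    funext y
    show β y = β (BGKAux.PhiL (BGKAux.Phi.symm y))
    congr 1
    exact (BGKAux.Phi.apply_symm_apply y).symm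
  have hfβ : fderiv ℝ β x = 0 := by
    have hcomp : HasFDerivAt (fun y => b (PhiLsymm y))
        ((fderiv ℝ b (PhiLsymm x)).comp PhiLsymm) x :=
      (hbdiff (PhiLsymm x)).hasFDerivAt.comp x PhiLsymm.hasFDerivAt
    rw [hβeq, hcomp.fderiv, hfb (PhiLsymm x), ContinuousLinearMap.zero_comp]
  rw [gradient, hfβ, map_zero]
end

section
/- Let T₁, T₂ > 0 and let μ : ℝ × ℝ → ℝ be C¹ and nonnegative, with μ integrable on (−M,∞) × ℝ for every M > 0. Suppose β : ℝ² → ℝ is C³ and periodic with periods T₁, T₂ in x₁, x₂, and suppose that for every (x₁,x₂) ∈ ℝ², −(∂²_{x₁}β + ∂²_{x₂}β)(x₁,x₂) = 1 − ∫_{ℝ³} μ((v₁² + v₂²)/2 − β(x₁,x₂), v₃) dv₁dv₂dv₃. Then ∇β ≡ 0; i.e. β is constant, so the field E₀ = (−∂_{x₁}β, −∂_{x₂}β, 0) vanishes identically. -/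
open MeasureTheory Real

section BGKAux

local notation "E2" => EuclideanSpace ℝ (Fin 2)

private lemma deriv2_nonpos_of_max {g g' : ℝ → ℝ} {c : ℝ} (hg : ∀ t, HasDerivAt g (g' t) t)
    (hg' : HasDerivAt g' c 0) (hmax : ∀ t, g t ≤ g 0) : c ≤ 0 := by
  by_contra hc
  push_neg at hc
  have h0 : g' 0 = 0 := by
    have hlm : IsLocalMax g 0 := Filter.Eventually.of_forall hmax
    exact hlm.hasDerivAt_eq_zero (hg 0)
  have hs : Filter.Tendsto (slope g' 0) (nhdsWithin 0 (Set.Ioi 0)) (nhds c) :=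
    (hasDerivAt_iff_tendsto_slope.1 hg').mono_left
      (nhdsWithin_mono 0 (fun x hx => ne_of_gt hx))
  have hev : ∀ᶠ t in nhdsWithin 0 (Set.Ioi 0), 0 < slope g' 0 t :=
    hs.eventually (eventually_gt_nhds hc)
  obtain ⟨u, hu, huI⟩ := mem_nhdsGT_iff_exists_Ioo_subset.1 hev
  have hu0 : (0:ℝ) < u := hu
  have hgpos : ∀ t ∈ Set.Ioo (0:ℝ) u, 0 < g' t := by
    intro t ht
    have hst : 0 < slope g' 0 t := huI ht
    have heq : slope g' 0 t = g' t / t := by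
      simp [slope_def_field, h0]
    rw [heq] at hst
    have := mul_pos hst ht.1
    rwa [div_mul_cancel₀ _ (ne_of_gt ht.1)] at this
  obtain ⟨ξ, hξ, hslope⟩ := exists_hasDerivAt_eq_slope g g' (half_pos hu0)
    (fun x _ => (hg x).continuousAt.continuousWithinAt) (fun x _ => hg x)
  have h1 : 0 < g' ξ := hgpos ξ ⟨hξ.1, lt_trans hξ.2 (half_lt_self hu0)⟩
  rw [hslope] at h1
  have h2 : g (u/2) - g 0 ≤ 0 := sub_nonpos.2 (hmax _)
  have := div_nonpos_of_nonpos_of_nonneg h2 (by linarith : (0:ℝ) ≤ u/2 - 0)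
  linarith

private lemma hess_nonpos_of_max {β : E2 → ℝ} (hβ : ContDiff ℝ 3 β)
    {x₀ : E2} (hmax : ∀ y, β y ≤ β x₀) (e : E2) :
    fderiv ℝ (fderiv ℝ β) x₀ e e ≤ 0 := by
  have hβ1 : Differentiable ℝ β := hβ.differentiable (by norm_num)
  have hβ2 : Differentiable ℝ (fderiv ℝ β) :=
    (hβ.fderiv_right (m := 2) (by norm_num)).differentiable (by norm_num)
  set L : ℝ → E2 := fun t => x₀ + t • e with hL_def
  have hL : ∀ t, HasDerivAt L e t := by
    intro t
    simpa [hL_def] using ((hasDerivAt_id t).smul_const e).const_add x₀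
  have hg : ∀ t, HasDerivAt (fun s => β (L s)) (fderiv ℝ β (L t) e) t := fun t =>
    (hβ1 (L t)).hasFDerivAt.comp_hasDerivAt t (hL t)
  have hL0 : L 0 = x₀ := by simp [hL_def]
  have hgd : HasDerivAt (fun t => fderiv ℝ β (L t)) (fderiv ℝ (fderiv ℝ β) x₀ e) 0 := by
    have := (hβ2 (L 0)).hasFDerivAt.comp_hasDerivAt 0 (hL 0)
    rwa [hL0] at this
  have hgd' : HasDerivAt (fun t => fderiv ℝ β (L t) e) (fderiv ℝ (fderiv ℝ β) x₀ e e) 0 := by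
    have := (ContinuousLinearMap.apply ℝ ℝ e).hasFDerivAt.comp_hasDerivAt 0 hgd
    exact this
  refine deriv2_nonpos_of_max hg hgd' ?_
  intro t
  rw [hL0]
  exact hmax (L t)

private lemma per_int {γ : E2 → ℝ} {τ : E2} (h : ∀ x, γ (x + τ) = γ x) :
    ∀ (n : ℤ) (x : E2), γ (x + n • τ) = γ x := by
  intro n
  induction n using Int.induction_on with
  | zero => simp
  | succ k ih =>
    intro x
    have e : x + ((k : ℤ) + 1) • τ = (x + (k : ℤ) • τ) + τ := by
      rw [add_zsmul, one_zsmul, ← add_assoc]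
    rw [e, h, ih]
  | pred k ih =>
    intro x
    have e : x + (-(k : ℤ) - 1) • τ + τ = x + (-(k : ℤ)) • τ := by
      rw [sub_zsmul, one_zsmul]; abel
    calc γ (x + (-(k : ℤ) - 1) • τ) = γ (x + (-(k : ℤ) - 1) • τ + τ) := (h _).symm
      _ = γ (x + (-(k : ℤ)) • τ) := by rw [e]
      _ = γ x := ih x

private lemma e2norm (x : E2) : ‖x‖ = Real.sqrt ((x 0) ^ 2 + (x 1) ^ 2) := by
  rw [EuclideanSpace.norm_eq]
  congr 1
  rw [Fin.sum_univ_two]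
  simp [sq_abs]

private lemma exists_global_max {γ : E2 → ℝ} (hc : Continuous γ) {T₁ T₂ : ℝ}
    (hT₁ : 0 < T₁) (hT₂ : 0 < T₂)
    (h1 : ∀ x, γ (x + T₁ • EuclideanSpace.single (0 : Fin 2) (1 : ℝ)) = γ x)
    (h2 : ∀ x, γ (x + T₂ • EuclideanSpace.single (1 : Fin 2) (1 : ℝ)) = γ x) :
    ∃ x₀, ∀ y, γ y ≤ γ x₀ := by
  have hR : 0 < T₁ + T₂ := by linarith
  obtain ⟨x₀, _, hx₀⟩ := (isCompact_closedBall (0 : E2) (T₁ + T₂)).exists_isMaxOn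
    ⟨0, by simp [hR.le]⟩ hc.continuousOn
  refine ⟨x₀, fun y => ?_⟩
  set n : ℤ := ⌊y 0 / T₁⌋ with hn
  set m : ℤ := ⌊y 1 / T₂⌋ with hm
  set y' : E2 := y + (-n) • (T₁ • EuclideanSpace.single (0 : Fin 2) (1 : ℝ))
      + (-m) • (T₂ • EuclideanSpace.single (1 : Fin 2) (1 : ℝ)) with hy'
  have hval : γ y' = γ y := by
    rw [hy', per_int h2, per_int h1]
  have hc0 : y' 0 = y 0 - n * T₁ := by
    simp [hy', EuclideanSpace.single_apply]
    ring
  have hc1 : y' 1 = y 1 - m * T₂ := by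
    simp [hy', EuclideanSpace.single_apply]
    ring
  have hb0 : 0 ≤ y' 0 ∧ y' 0 < T₁ := by
    rw [hc0]
    constructor
    · have := Int.floor_le (y 0 / T₁)
      rw [← hn] at this
      have := mul_le_mul_of_nonneg_right this hT₁.le
      rw [div_mul_cancel₀ _ hT₁.ne'] at this
      linarith
    · have := Int.lt_floor_add_one (y 0 / T₁)
      rw [← hn] at this
      have := mul_lt_mul_of_pos_right this hT₁
      rw [div_mul_cancel₀ _ hT₁.ne'] at this
      linarith
  have hb1 : 0 ≤ y' 1 ∧ y' 1 < T₂ := by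
    rw [hc1]
    constructor
    · have := Int.floor_le (y 1 / T₂)
      rw [← hm] at this
      have := mul_le_mul_of_nonneg_right this hT₂.le
      rw [div_mul_cancel₀ _ hT₂.ne'] at this
      linarith
    · have := Int.lt_floor_add_one (y 1 / T₂)
      rw [← hm] at this
      have := mul_lt_mul_of_pos_right this hT₂
      rw [div_mul_cancel₀ _ hT₂.ne'] at this
      linarith
  have hmem : y' ∈ Metric.closedBall (0 : E2) (T₁ + T₂) := by
    rw [Metric.mem_closedBall, dist_zero_right, e2norm]
    have hsq : (y' 0) ^ 2 + (y' 1) ^ 2 ≤ (T₁ + T₂) ^ 2 := by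
      nlinarith [hb0.1, hb0.2, hb1.1, hb1.2]
    calc Real.sqrt ((y' 0) ^ 2 + (y' 1) ^ 2) ≤ Real.sqrt ((T₁ + T₂) ^ 2) :=
          Real.sqrt_le_sqrt hsq
      _ = T₁ + T₂ := Real.sqrt_sq hR.le
  calc γ y = γ y' := hval.symm
    _ ≤ γ x₀ := hx₀ hmem

private lemma sq_norm_e2 (w : E2) : ‖w‖ ^ 2 = (w 0) ^ 2 + (w 1) ^ 2 := by
  rw [EuclideanSpace.norm_eq, Real.sq_sqrt (by positivity)]
  rw [Fin.sum_univ_two]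
  simp [sq_abs]

private lemma oned_change {μ : ℝ × ℝ → ℝ} (b y : ℝ) :
    ∫⁻ u in Set.Ioi (-b), ENNReal.ofReal (μ (u, y)) =
      ∫⁻ r in Set.Ioi (0 : ℝ), ENNReal.ofReal r * ENNReal.ofReal (μ (r ^ 2 / 2 - b, y)) := by
  have himg : (fun r : ℝ => r ^ 2 / 2 - b) '' Set.Ioi 0 = Set.Ioi (-b) := by
    ext u
    constructor
    · rintro ⟨r, hr, rfl⟩
      have : (0:ℝ) < r := hr
      simp only [Set.mem_Ioi]
      nlinarith
    · intro hu
      have hu' : 0 < u + b := by simpa using neg_lt_iff_pos_add.1 hu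
      refine ⟨Real.sqrt (2 * (u + b)), ?_, ?_⟩
      · exact Real.sqrt_pos.2 (by linarith)
      · show Real.sqrt (2 * (u + b)) ^ 2 / 2 - b = u
        rw [Real.sq_sqrt (by linarith)]
        ring
  have hder : ∀ r ∈ Set.Ioi (0:ℝ), HasFDerivWithinAt (fun r : ℝ => r ^ 2 / 2 - b)
      ((1 : ℝ →L[ℝ] ℝ).smulRight r) (Set.Ioi 0) r := by
    intro r _
    have : HasDerivAt (fun r : ℝ => r ^ 2 / 2 - b) r r := by
      simpa using ((hasDerivAt_pow 2 r).div_const 2).sub_const b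
    exact this.hasFDerivAt.hasFDerivWithinAt
  have hinj : Set.InjOn (fun r : ℝ => r ^ 2 / 2 - b) (Set.Ioi 0) := by
    intro r hr s hs h
    simp only [Set.mem_Ioi] at hr hs
    have h2 : (r - s) * (r + s) = 0 := by linear_combination 2 * h
    rcases mul_eq_zero.1 h2 with h3 | h3
    · linarith
    · linarith
  rw [← himg, lintegral_image_eq_lintegral_abs_det_fderiv_mul volume measurableSet_Ioi hder hinj]
  refine setLIntegral_congr_fun measurableSet_Ioi (fun r hr => ?_)
  rw [ContinuousLinearMap.det_smulRight, ContinuousLinearMap.one_apply, one_mul, abs_of_pos (show (0:ℝ) < r from hr)]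

private lemma polar_plane {μ : ℝ × ℝ → ℝ} (hc : Continuous μ) (b y : ℝ) :
    ∫⁻ w : E2, ENNReal.ofReal (μ (‖w‖ ^ 2 / 2 - b, y)) =
      ENNReal.ofReal (2 * π) * ∫⁻ u in Set.Ioi (-b), ENNReal.ofReal (μ (u, y)) := by
  set e : E2 ≃ᵐ ℝ × ℝ :=
    (MeasurableEquiv.toLp 2 (Fin 2 → ℝ)).symm.trans MeasurableEquiv.finTwoArrow with he
  have mp : MeasurePreserving e volume volume :=
    (volume_preserving_finTwoArrow ℝ).comp
      (EuclideanSpace.volume_preserving_symm_measurableEquiv_toLp (Fin 2))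
  have h1 : ∫⁻ w : E2, ENNReal.ofReal (μ (‖w‖ ^ 2 / 2 - b, y)) =
      ∫⁻ p : ℝ × ℝ, ENNReal.ofReal (μ ((p.1 ^ 2 + p.2 ^ 2) / 2 - b, y)) := by
    rw [← mp.lintegral_comp_emb e.measurableEmbedding
      (fun p => ENNReal.ofReal (μ ((p.1 ^ 2 + p.2 ^ 2) / 2 - b, y)))]
    congr 1
    funext w
    have hew : e w = (w 0, w 1) := rfl
    rw [hew, sq_norm_e2]
  rw [h1]
  set B : ℝ × ℝ → ℝ × ℝ →L[ℝ] ℝ × ℝ := fun p =>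
    LinearMap.toContinuousLinearMap (Matrix.toLin (Module.Basis.finTwoProd ℝ) (Module.Basis.finTwoProd ℝ)
      !![cos p.2, -p.1 * sin p.2; sin p.2, p.1 * cos p.2]) with hB
  have B_det : ∀ p, (B p).det = p.1 := by
    intro p
    conv_rhs => rw [← one_mul p.1, ← cos_sq_add_sin_sq p.2]
    simp only [hB, neg_mul, LinearMap.det_toContinuousLinearMap, LinearMap.det_toLin,
      Matrix.det_fin_two_of, sub_neg_eq_add]
    ring
  have h2 : ∫⁻ p : ℝ × ℝ, ENNReal.ofReal (μ ((p.1 ^ 2 + p.2 ^ 2) / 2 - b, y)) =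
      ∫⁻ q in polarCoord.target,
        ENNReal.ofReal q.1 * ENNReal.ofReal (μ (q.1 ^ 2 / 2 - b, y)) := by
    calc ∫⁻ p : ℝ × ℝ, ENNReal.ofReal (μ ((p.1 ^ 2 + p.2 ^ 2) / 2 - b, y))
        = ∫⁻ p in polarCoord.source, ENNReal.ofReal (μ ((p.1 ^ 2 + p.2 ^ 2) / 2 - b, y)) := by
          rw [← setLIntegral_univ]
          exact (setLIntegral_congr polarCoord_source_ae_eq_univ).symm
      _ = ∫⁻ p in polarCoord.symm '' polarCoord.target,
            ENNReal.ofReal (μ ((p.1 ^ 2 + p.2 ^ 2) / 2 - b, y)) := by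
          rw [polarCoord.symm_image_target_eq_source]
      _ = ∫⁻ q in polarCoord.target, ENNReal.ofReal |(B q).det| *
            ENNReal.ofReal (μ (((polarCoord.symm q).1 ^ 2 + (polarCoord.symm q).2 ^ 2) / 2 - b, y)) :=
          lintegral_image_eq_lintegral_abs_det_fderiv_mul volume
            polarCoord.open_target.measurableSet
            (fun q _ => (hasFDerivAt_polarCoord_symm q).hasFDerivWithinAt)
            polarCoord.symm.injOn _
      _ = ∫⁻ q in polarCoord.target,
            ENNReal.ofReal q.1 * ENNReal.ofReal (μ (q.1 ^ 2 / 2 - b, y)) := by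
          refine setLIntegral_congr_fun polarCoord.open_target.measurableSet
            (fun q hq => ?_)
          have hq1 : (0:ℝ) < q.1 := hq.1
          have hsq : (polarCoord.symm q).1 ^ 2 + (polarCoord.symm q).2 ^ 2 = q.1 ^ 2 := by
            rw [polarCoord_symm_apply]
            have := sin_sq_add_cos_sq q.2
            dsimp only
            linear_combination q.1 ^ 2 * this
          rw [B_det, abs_of_pos hq1, hsq]
  rw [h2]
  have hmeas : AEMeasurable (fun q : ℝ × ℝ =>
      ENNReal.ofReal q.1 * ENNReal.ofReal (μ (q.1 ^ 2 / 2 - b, y)))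
      ((volume.restrict (Set.Ioi (0:ℝ))).prod (volume.restrict (Set.Ioo (-π) π))) := by
    refine Measurable.aemeasurable ?_
    refine (measurable_fst.ennreal_ofReal).mul ?_
    refine Measurable.ennreal_ofReal ?_
    exact (hc.comp
      ((((continuous_fst.pow 2).div_const 2).sub continuous_const).prodMk
        continuous_const)).measurable
  rw [polarCoord_target, Measure.volume_eq_prod, ← Measure.prod_restrict,
    lintegral_prod _ hmeas]
  have h3 : ∀ r : ℝ, (∫⁻ θ in Set.Ioo (-π) π,
      ENNReal.ofReal r * ENNReal.ofReal (μ (r ^ 2 / 2 - b, y))) =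
      ENNReal.ofReal (2 * π) * (ENNReal.ofReal r * ENNReal.ofReal (μ (r ^ 2 / 2 - b, y))) := by
    intro r
    rw [setLIntegral_const, Real.volume_Ioo]
    rw [mul_comm]
    congr 1
    ring_nf
  simp_rw [h3]
  rw [lintegral_const_mul' _ _ ENNReal.ofReal_ne_top]
  rw [oned_change]

private lemma Lval {μ : ℝ × ℝ → ℝ} (hc : Continuous μ) (b : ℝ) :
    ∫⁻ v : E2 × ℝ, ENNReal.ofReal (μ (‖v.1‖ ^ 2 / 2 - b, v.2)) =
      ENNReal.ofReal (2 * π) * ∫⁻ y : ℝ, ∫⁻ u in Set.Ioi (-b), ENNReal.ofReal (μ (u, y)) := by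
  have hmeas : AEMeasurable (fun v : E2 × ℝ => ENNReal.ofReal (μ (‖v.1‖ ^ 2 / 2 - b, v.2)))
      ((volume : Measure E2).prod volume) := by
    refine Measurable.aemeasurable (Measurable.ennreal_ofReal ?_)
    exact (hc.comp ((((continuous_fst.norm.pow 2).div_const 2).sub continuous_const).prodMk
      continuous_snd)).measurable
  rw [Measure.volume_eq_prod, lintegral_prod_symm _ hmeas]
  calc ∫⁻ y : ℝ, ∫⁻ w : E2, ENNReal.ofReal (μ (‖w‖ ^ 2 / 2 - b, y))
      = ∫⁻ y : ℝ, ENNReal.ofReal (2 * π) * ∫⁻ u in Set.Ioi (-b), ENNReal.ofReal (μ (u, y)) :=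
        lintegral_congr fun y => polar_plane hc b y
    _ = _ := lintegral_const_mul' _ _ ENNReal.ofReal_ne_top

private lemma Kfin {μ : ℝ × ℝ → ℝ} (hc : Continuous μ)
    (hint : ∀ M : ℝ, 0 < M → IntegrableOn μ (Set.Ioi (-M) ×ˢ (Set.univ : Set ℝ))) (b : ℝ) :
    (∫⁻ y : ℝ, ∫⁻ u in Set.Ioi (-b), ENNReal.ofReal (μ (u, y))) < ⊤ := by
  set M : ℝ := |b| + 1 with hMdef
  have hM : 0 < M := by positivity
  have hsub : Set.Ioi (-b) ⊆ Set.Ioi (-M) :=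
    Set.Ioi_subset_Ioi (by
      have := le_abs_self b
      simp only [hMdef]
      linarith)
  have h1 : (∫⁻ y : ℝ, ∫⁻ u in Set.Ioi (-b), ENNReal.ofReal (μ (u, y))) ≤
      ∫⁻ y : ℝ, ∫⁻ u in Set.Ioi (-M), ENNReal.ofReal (μ (u, y)) :=
    lintegral_mono fun y => lintegral_mono_set hsub
  have hmeas : AEMeasurable (fun p : ℝ × ℝ => ENNReal.ofReal (μ p))
      ((volume.restrict (Set.Ioi (-M))).prod volume) :=
    (hc.measurable.ennreal_ofReal).aemeasurable
  have h2 : (∫⁻ y : ℝ, ∫⁻ u in Set.Ioi (-M), ENNReal.ofReal (μ (u, y))) =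
      ∫⁻ p in Set.Ioi (-M) ×ˢ (Set.univ : Set ℝ), ENNReal.ofReal (μ p) := by
    rw [Measure.volume_eq_prod, ← Measure.prod_restrict, Measure.restrict_univ,
      lintegral_prod_symm _ hmeas]
  have h3 := (hint M hM).lintegral_lt_top
  exact lt_of_le_of_lt (h1.trans (le_of_eq h2)) h3

private lemma Imono {μ : ℝ × ℝ → ℝ} (hc : Continuous μ) (hpos : ∀ p, 0 ≤ μ p)
    (hint : ∀ M : ℝ, 0 < M → IntegrableOn μ (Set.Ioi (-M) ×ˢ (Set.univ : Set ℝ)))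
    {b b' : ℝ} (h : b ≤ b') :
    (∫ v : E2 × ℝ, μ (‖v.1‖ ^ 2 / 2 - b, v.2)) ≤ ∫ v : E2 × ℝ, μ (‖v.1‖ ^ 2 / 2 - b', v.2) := by
  have hrep : ∀ c : ℝ, (∫ v : E2 × ℝ, μ (‖v.1‖ ^ 2 / 2 - c, v.2)) =
      (∫⁻ v : E2 × ℝ, ENNReal.ofReal (μ (‖v.1‖ ^ 2 / 2 - c, v.2))).toReal := by
    intro c
    refine integral_eq_lintegral_of_nonneg_ae (Filter.Eventually.of_forall fun v => hpos _) ?_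
    exact (hc.comp ((((continuous_fst.norm.pow 2).div_const 2).sub continuous_const).prodMk
      continuous_snd)).aestronglyMeasurable
  rw [hrep b, hrep b']
  apply ENNReal.toReal_mono
  · rw [Lval hc b']
    exact ENNReal.mul_ne_top ENNReal.ofReal_ne_top (Kfin hc hint b').ne
  · rw [Lval hc b, Lval hc b']
    exact mul_le_mul_right
      (lintegral_mono fun y => lintegral_mono_set (Set.Ioi_subset_Ioi (neg_le_neg h))) _

private lemma lap2_eq (β : E2 → ℝ) (x : E2) :
    lap2 β x = fderiv ℝ (fderiv ℝ β) x (EuclideanSpace.single 0 1) (EuclideanSpace.single 0 1)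
      + fderiv ℝ (fderiv ℝ β) x (EuclideanSpace.single 1 1) (EuclideanSpace.single 1 1) := by
  rw [lap2, Fin.sum_univ_two, iteratedFDeriv_two_apply, iteratedFDeriv_two_apply]
  simp

private lemma fderiv_per {β : E2 → ℝ} (hd : Differentiable ℝ β) {τ : E2}
    (h : ∀ x, β (x + τ) = β x) (x : E2) : fderiv ℝ β (x + τ) = fderiv ℝ β x := by
  have h1 : HasFDerivAt (fun z => β (z + τ)) (fderiv ℝ β (x + τ)) x := by
    have := (hd (x + τ)).hasFDerivAt.comp x ((hasFDerivAt_id x).add_const τ)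
    exact this
  have h2 : (fun z => β (z + τ)) = β := funext h
  rw [h2] at h1
  exact (h1.fderiv).symm

private lemma e2decomp (v : E2) : v = v 0 • EuclideanSpace.single (0 : Fin 2) (1 : ℝ)
    + v 1 • EuclideanSpace.single (1 : Fin 2) (1 : ℝ) := by
  ext i
  fin_cases i <;> simp [EuclideanSpace.single_apply]

set_option linter.unnecessarySeqFocus false in
private lemma fderiv_const_of_harmonic {β : E2 → ℝ} (hβ : ContDiff ℝ 3 β)
    (hharm : ∀ x : E2,
      fderiv ℝ (fderiv ℝ β) x (EuclideanSpace.single (0:Fin 2) (1:ℝ)) (EuclideanSpace.single (0:Fin 2) (1:ℝ))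
      + fderiv ℝ (fderiv ℝ β) x (EuclideanSpace.single (1:Fin 2) (1:ℝ)) (EuclideanSpace.single (1:Fin 2) (1:ℝ)) = 0)
    {C : ℝ} (hbound : ∀ x : E2,
      ‖((fderiv ℝ β x (EuclideanSpace.single (0:Fin 2) (1:ℝ)) : ℝ) : ℂ)
        - ((fderiv ℝ β x (EuclideanSpace.single (1:Fin 2) (1:ℝ)) : ℝ) : ℂ) * Complex.I‖ ≤ C) :
    ∀ x y : E2, fderiv ℝ β x = fderiv ℝ β y := by
  set e₀ : E2 := EuclideanSpace.single (0:Fin 2) (1:ℝ) with he₀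
  set e₁ : E2 := EuclideanSpace.single (1:Fin 2) (1:ℝ) with he₁
  have hβ1 : Differentiable ℝ β := hβ.differentiable (by norm_num)
  have hβ2' : ContDiff ℝ 2 (fderiv ℝ β) := hβ.fderiv_right (by norm_num)
  have hβ2 : Differentiable ℝ (fderiv ℝ β) := hβ2'.differentiable (by norm_num)
  set H : E2 → E2 →L[ℝ] E2 →L[ℝ] ℝ := fun x => fderiv ℝ (fderiv ℝ β) x with hHdef
  have hsymm : ∀ x : E2, ∀ v w : E2, H x v w = H x w v := fun x v w =>
    second_derivative_symmetric (fun y => (hβ1 y).hasFDerivAt) ((hβ2 x).hasFDerivAt) v w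
  set ψL : ℂ →L[ℝ] E2 := Complex.reCLM.smulRight e₀ + Complex.imCLM.smulRight e₁ with hψdef
  have hψL : ∀ z : ℂ, ψL z = z.re • e₀ + z.im • e₁ := fun z => rfl
  set g : ℂ → ℂ := fun z =>
    (fderiv ℝ β (ψL z) e₀) • (1:ℂ) - (fderiv ℝ β (ψL z) e₁) • Complex.I with hgdef
  have hder : ∀ z : ℂ, HasDerivAt g
      ((H (ψL z) e₀ e₀ : ℂ) - (H (ψL z) e₀ e₁ : ℂ) * Complex.I) z := by
    intro z
    have h0 : HasFDerivAt (fun z => fderiv ℝ β (ψL z)) ((H (ψL z)).comp ψL) z :=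
      (hβ2 (ψL z)).hasFDerivAt.comp z ψL.hasFDerivAt
    have hAu : HasFDerivAt (fun z => fderiv ℝ β (ψL z) e₀)
        ((ContinuousLinearMap.apply ℝ ℝ e₀).comp ((H (ψL z)).comp ψL)) z :=
      (ContinuousLinearMap.apply ℝ ℝ e₀).hasFDerivAt.comp z h0
    have hAw : HasFDerivAt (fun z => fderiv ℝ β (ψL z) e₁)
        ((ContinuousLinearMap.apply ℝ ℝ e₁).comp ((H (ψL z)).comp ψL)) z :=
      (ContinuousLinearMap.apply ℝ ℝ e₁).hasFDerivAt.comp z h0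
    have hreal : HasFDerivAt g
        ((((ContinuousLinearMap.apply ℝ ℝ e₀).comp ((H (ψL z)).comp ψL)).smulRight (1:ℂ))
          - (((ContinuousLinearMap.apply ℝ ℝ e₁).comp ((H (ψL z)).comp ψL)).smulRight Complex.I)) z :=
      (hAu.smul_const (1:ℂ)).sub (hAw.smul_const Complex.I)
    rw [hasDerivAt_iff_hasFDerivAt]
    refine hasFDerivAt_of_restrictScalars ℝ hreal ?_
    ext ξ
    have hξ : ψL ξ = ξ.re • e₀ + ξ.im • e₁ := hψL ξ
    set a : ℝ := H (ψL z) e₀ e₀ with ha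
    set b : ℝ := H (ψL z) e₀ e₁ with hb
    have h10 : H (ψL z) e₁ e₀ = b := by rw [hb]; exact hsymm _ _ _
    have h11 : H (ψL z) e₁ e₁ = -a := by
      have h : H (ψL z) e₀ e₀ + H (ψL z) e₁ e₁ = 0 := hharm (ψL z)
      rw [ha]
      linarith
    have hu : H (ψL z) (ψL ξ) e₀ = ξ.re * a + ξ.im * b := by
      rw [hξ, map_add, _root_.map_smul, _root_.map_smul]
      simp only [ContinuousLinearMap.add_apply, ContinuousLinearMap.smul_apply]
      rw [h10, ← ha]
      simp [smul_eq_mul]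
    have hw : H (ψL z) (ψL ξ) e₁ = ξ.re * b - ξ.im * a := by
      rw [hξ, map_add, _root_.map_smul, _root_.map_smul]
      simp only [ContinuousLinearMap.add_apply, ContinuousLinearMap.smul_apply]
      rw [h11, ← hb]
      simp [smul_eq_mul]
      ring
    show ξ • ((a : ℂ) - (b : ℂ) * Complex.I) =
      (H (ψL z) (ψL ξ) e₀) • (1:ℂ) - (H (ψL z) (ψL ξ) e₁) • Complex.I
    rw [hu, hw, smul_eq_mul]
    apply Complex.ext <;>
      simp [Complex.real_smul, Complex.mul_re, Complex.mul_im, Complex.sub_re, Complex.sub_im] <;>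
      ring
  have gdiff : Differentiable ℂ g := fun z => (hder z).differentiableAt
  have gb : Bornology.IsBounded (Set.range g) := by
    rw [isBounded_iff_forall_norm_le]
    refine ⟨C, ?_⟩
    rintro _ ⟨z, rfl⟩
    have := hbound (ψL z)
    simpa [hgdef, Complex.real_smul] using this
  have hconst : ∀ z, g z = g 0 := fun z => gdiff.apply_eq_apply_of_bounded gb z 0
  have key : ∀ x : E2, fderiv ℝ β x e₀ = fderiv ℝ β 0 e₀ ∧
      fderiv ℝ β x e₁ = fderiv ℝ β 0 e₁ := by
    intro x
    have hx : ψL ((x 0 : ℂ) + (x 1 : ℂ) * Complex.I) = x := by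
      rw [hψL]
      simp
      exact (e2decomp x).symm
    have hcz := hconst ((x 0 : ℂ) + (x 1 : ℂ) * Complex.I)
    rw [hgdef] at hcz
    simp only [hx] at hcz
    constructor
    · simpa [Complex.real_smul] using congrArg Complex.re hcz
    · simpa [Complex.real_smul] using congrArg Complex.im hcz
  intro x y
  ext1 v
  rw [show v = v 0 • e₀ + v 1 • e₁ from e2decomp v, map_add, map_add, _root_.map_smul,
    _root_.map_smul, _root_.map_smul, _root_.map_smul, (key x).1, (key x).2, (key y).1,
    (key y).2]

end BGKAux

/-- Non-existence of genuinely 3D planar BGK waves: if `μ : ℝ × ℝ → ℝ` is `C¹`, nonnegative,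
integrable on `(−M,∞) × ℝ` for every `M > 0`, `β : ℝ² → ℝ` is `C³` and periodic with periods
`T₁, T₂`, and `−(∂²_{x₁}β + ∂²_{x₂}β)(x) = 1 − ∫_{ℝ³} μ((v₁²+v₂²)/2 − β(x), v₃) dv` for all
`x`, then `∇β ≡ 0`; here the velocity variable is `v = (v₁, v₂, v₃) ∈ ℝ² × ℝ`. -/
theorem stmt_1 (T₁ T₂ : ℝ) (hT₁ : 0 < T₁) (hT₂ : 0 < T₂)
    (μ : ℝ × ℝ → ℝ) (hμreg : ContDiff ℝ 1 μ) (hμpos : ∀ p, 0 ≤ μ p)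
    (hμint : ∀ M : ℝ, 0 < M → IntegrableOn μ (Set.Ioi (-M) ×ˢ (Set.univ : Set ℝ)))
    (β : EuclideanSpace ℝ (Fin 2) → ℝ) (hβ : ContDiff ℝ 3 β)
    (hper1 : ∀ x, β (x + T₁ • EuclideanSpace.single (0 : Fin 2) (1 : ℝ)) = β x)
    (hper2 : ∀ x, β (x + T₂ • EuclideanSpace.single (1 : Fin 2) (1 : ℝ)) = β x)
    (hPoisson : ∀ x, -lap2 β x =
      1 - ∫ v : EuclideanSpace ℝ (Fin 2) × ℝ, μ (‖v.1‖ ^ 2 / 2 - β x, v.2)) :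
    ∀ x, gradient β x = 0 := by
  have hc : Continuous μ := hμreg.continuous
  have hcontβ : Continuous β := hβ.continuous
  have hβdiff : Differentiable ℝ β := hβ.differentiable (by norm_num)
  -- global max and min of β
  obtain ⟨xM, hxM⟩ := exists_global_max hcontβ hT₁ hT₂ hper1 hper2
  obtain ⟨xm, hxm⟩ := exists_global_max hcontβ.neg hT₁ hT₂
    (fun x => by simp [hper1 x]) (fun x => by simp [hper2 x])
  have hxm' : ∀ y, β xm ≤ β y := fun y => by simpa using hxm y
  have hlap : ∀ x, lap2 β x =
      (∫ v : EuclideanSpace ℝ (Fin 2) × ℝ, μ (‖v.1‖ ^ 2 / 2 - β x, v.2)) - 1 := fun x => by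
    have := hPoisson x; linarith
  have hM1 : (∫ v : EuclideanSpace ℝ (Fin 2) × ℝ, μ (‖v.1‖ ^ 2 / 2 - β xM, v.2)) ≤ 1 := by
    have h0 := hess_nonpos_of_max hβ hxM (EuclideanSpace.single (0:Fin 2) (1:ℝ))
    have h1 := hess_nonpos_of_max hβ hxM (EuclideanSpace.single (1:Fin 2) (1:ℝ))
    have hl := lap2_eq β xM
    have hp := hlap xM
    linarith
  have hm1 : 1 ≤ ∫ v : EuclideanSpace ℝ (Fin 2) × ℝ, μ (‖v.1‖ ^ 2 / 2 - β xm, v.2) := by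
    have h0 := hess_nonpos_of_max hβ.neg hxm (EuclideanSpace.single (0:Fin 2) (1:ℝ))
    have h1 := hess_nonpos_of_max hβ.neg hxm (EuclideanSpace.single (1:Fin 2) (1:ℝ))
    have hneg1 : (fderiv ℝ (fun y => -β y)) = fun y => -fderiv ℝ β y :=
      funext fun y => fderiv_neg
    rw [hneg1] at h0 h1
    have hneg2 : fderiv ℝ (fun y => -(fderiv ℝ β y)) xm = -(fderiv ℝ (fderiv ℝ β) xm) :=
      fderiv_neg
    rw [hneg2] at h0 h1
    simp only [ContinuousLinearMap.neg_apply] at h0 h1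
    have hl := lap2_eq β xm
    have hp := hlap xm
    linarith
  have hI1 : ∀ x, lap2 β x = 0 := by
    intro x
    have h1 := Imono hc hμpos hμint (hxm' x)
    have h2 := Imono hc hμpos hμint (hxM x)
    have hp := hlap x
    linarith
  have hharm : ∀ x : EuclideanSpace ℝ (Fin 2),
      fderiv ℝ (fderiv ℝ β) x (EuclideanSpace.single (0:Fin 2) (1:ℝ)) (EuclideanSpace.single (0:Fin 2) (1:ℝ))
      + fderiv ℝ (fderiv ℝ β) x (EuclideanSpace.single (1:Fin 2) (1:ℝ)) (EuclideanSpace.single (1:Fin 2) (1:ℝ)) = 0 := by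
    intro x
    have hl := lap2_eq β x
    have := hI1 x
    linarith
  -- boundedness of the complex gradient
  have hfcont : Continuous (fderiv ℝ β) := (hβ.fderiv_right (m := 2) (by norm_num)).continuous
  set G : EuclideanSpace ℝ (Fin 2) → ℝ := fun x =>
    ‖((fderiv ℝ β x (EuclideanSpace.single (0:Fin 2) (1:ℝ)) : ℝ) : ℂ)
      - ((fderiv ℝ β x (EuclideanSpace.single (1:Fin 2) (1:ℝ)) : ℝ) : ℂ) * Complex.I‖ with hG
  have hGcont : Continuous G := by
    rw [hG]
    apply Continuous.norm
    apply Continuous.sub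
    · exact Complex.continuous_ofReal.comp
        ((ContinuousLinearMap.apply ℝ ℝ (EuclideanSpace.single (0:Fin 2) (1:ℝ))).continuous.comp
          hfcont)
    · exact (Complex.continuous_ofReal.comp
        ((ContinuousLinearMap.apply ℝ ℝ (EuclideanSpace.single (1:Fin 2) (1:ℝ))).continuous.comp
          hfcont)).mul continuous_const
  have hGper1 : ∀ x, G (x + T₁ • EuclideanSpace.single (0 : Fin 2) (1 : ℝ)) = G x := by
    intro x
    have h := fderiv_per hβdiff hper1 x
    simp only [hG, h]
  have hGper2 : ∀ x, G (x + T₂ • EuclideanSpace.single (1 : Fin 2) (1 : ℝ)) = G x := by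
    intro x
    have h := fderiv_per hβdiff hper2 x
    simp only [hG, h]
  obtain ⟨xb, hxb⟩ := exists_global_max hGcont hT₁ hT₂ hGper1 hGper2
  have hfd := fderiv_const_of_harmonic hβ hharm (C := G xb) (fun x => hxb x)
  -- the constant components are zero
  have hzero : ∀ e : EuclideanSpace ℝ (Fin 2), ∀ T : ℝ, 0 < T →
      (∀ x, β (x + T • e) = β x) → fderiv ℝ β 0 e = 0 := by
    intro e T hT hper
    set c : ℝ := fderiv ℝ β (0 : EuclideanSpace ℝ (Fin 2)) e with hcdef
    have hφ : ∀ t : ℝ, HasDerivAt (fun t : ℝ => β (t • e)) c t := by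
      intro t
      have hL : HasDerivAt (fun t : ℝ => t • e) e t := by
        simpa using (hasDerivAt_id t).smul_const e
      have h2 := (hβdiff (t • e)).hasFDerivAt.comp_hasDerivAt t hL
      have h3 : fderiv ℝ β (t • e) = fderiv ℝ β 0 := hfd _ _
      rwa [h3] at h2
    have hρ : ∀ t : ℝ, HasDerivAt (fun t : ℝ => β (t • e) - c * t) 0 t := by
      intro t
      have := (hφ t).sub ((hasDerivAt_id t).const_mul c)
      rw [mul_one, sub_self] at this
      exact this
    have hcst := is_const_of_deriv_eq_zero (𝕜 := ℝ)
      (fun t => (hρ t).differentiableAt) (fun t => (hρ t).deriv) T 0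
    have hper0 : β ((T : ℝ) • e) = β ((0:ℝ) • e) := by
      calc β ((T : ℝ) • e) = β (0 + T • e) := by rw [zero_add]
        _ = β 0 := hper 0
        _ = β ((0:ℝ) • e) := by rw [zero_smul]
    have hcT : c * T = 0 := by
      rw [hper0] at hcst
      linarith
    rcases mul_eq_zero.1 hcT with h | h
    · exact h
    · exact absurd h hT.ne'
  have hz0 : fderiv ℝ β 0 (EuclideanSpace.single (0:Fin 2) (1:ℝ)) = 0 :=
    hzero _ T₁ hT₁ hper1
  have hz1 : fderiv ℝ β 0 (EuclideanSpace.single (1:Fin 2) (1:ℝ)) = 0 :=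
    hzero _ T₂ hT₂ hper2
  intro x
  have hfzero : fderiv ℝ β x = 0 := by
    have hx0 : fderiv ℝ β x = fderiv ℝ β 0 := hfd x 0
    ext1 v
    rw [hx0, show v = v 0 • EuclideanSpace.single (0:Fin 2) (1:ℝ)
      + v 1 • EuclideanSpace.single (1:Fin 2) (1:ℝ) from e2decomp v, map_add,
      _root_.map_smul, _root_.map_smul, hz0, hz1]
    simp
  have hgrad : gradient β x =
      (InnerProductSpace.toDual ℝ (EuclideanSpace ℝ (Fin 2))).symm (fderiv ℝ β x) := rfl
  rw [hgrad, hfzero, map_zero]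
end

section
/- Let T₁, T₂, T₃ > 0 and let μ : ℝ → ℝ be C¹ and nonnegative with ∫₀^∞ μ(r)(1 + √r) dr < ∞. Suppose β : ℝ³ → ℝ is C³ and periodic with periods T₁, T₂, T₃ (β(x + Tᵢeᵢ) = β(x) for all x and i = 1,2,3), and suppose that for every x ∈ ℝ³, −Δβ(x) = 1 − ∫_{ℝ³} μ(|v|²/2 − β(x)) dv. Then ∇β ≡ 0; i.e. β is constant, so the electric field E₀ = −∇β vanishes identically. -/
open MeasureTheory Real

open Set


lemma shift_integral (h : ℝ → ℝ) (d : ℝ) (s : Set ℝ) :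
    ∫ t in (fun t => t + d) ⁻¹' s, h (t + d) = ∫ t in s, h t :=
  (measurePreserving_add_right volume d).setIntegral_preimage_emb
    (measurableEmbedding_addRight d) h s

lemma preimage_add_Ioi (d c : ℝ) : (fun t : ℝ => t + d) ⁻¹' (Ioi c) = Ioi (c - d) := by
  ext t; simp [lt_sub_iff_add_lt]

-- change of variables s = r^2/2
lemma cov_half_sq (g : ℝ → ℝ) :
    ∫ s in Ioi (0:ℝ), g s = ∫ r in Ioi (0:ℝ), r • g (r^2/2) := by
  have himg : (fun r : ℝ => r^2/2) '' (Ioi 0) = Ioi 0 := by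
    ext s
    constructor
    · rintro ⟨r, hr, rfl⟩
      have : (0:ℝ) < r := hr
      exact mem_Ioi.2 (by positivity)
    · intro hs
      refine ⟨Real.sqrt (2*s), mem_Ioi.2 (Real.sqrt_pos.2 (by simp at hs; linarith)), ?_⟩
      show (Real.sqrt (2*s))^2/2 = s
      rw [Real.sq_sqrt (by simp at hs; linarith)]
      ring
  have hderiv : ∀ r ∈ Ioi (0:ℝ), HasDerivWithinAt (fun r : ℝ => r^2/2) r (Ioi 0) r := by
    intro r _
    have := (hasDerivAt_pow 2 r).div_const 2
    simpa using this.hasDerivWithinAt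
  have hinj : InjOn (fun r : ℝ => r^2/2) (Ioi 0) := by
    intro a ha b hb h
    simp only [mem_Ioi] at ha hb
    have h2 : a^2 = b^2 := by dsimp at h; linarith
    calc a = Real.sqrt (a^2) := (Real.sqrt_sq ha.le).symm
      _ = Real.sqrt (b^2) := by rw [h2]
      _ = b := Real.sqrt_sq hb.le
  have := integral_image_eq_integral_abs_deriv_smul measurableSet_Ioi hderiv hinj g
  rw [himg] at this
  rw [this]
  apply setIntegral_congr_fun measurableSet_Ioi
  intro r hr
  simp only [mem_Ioi] at hr
  show |r| • g (r^2/2) = r • g (r^2/2)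
  rw [abs_of_pos hr]

lemma g_polar (μ : ℝ → ℝ) (b : ℝ) :
    (∫ v : EuclideanSpace ℝ (Fin 3), μ (‖v‖^2/2 - b)) =
      (3:ℕ) • (volume (Metric.ball (0:EuclideanSpace ℝ (Fin 3)) 1)).toReal •
        ∫ s in Ioi (0:ℝ), Real.sqrt (2*s) * μ (s - b) := by
  have h1 := integral_fun_norm_addHaar (volume : Measure (EuclideanSpace ℝ (Fin 3)))
    (fun r => μ (r^2/2 - b))
  rw [finrank_euclideanSpace_fin] at h1
  rw [h1]
  congr 1
  congr 1
  rw [cov_half_sq (fun s => Real.sqrt (2*s) * μ (s - b))]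
  apply setIntegral_congr_fun measurableSet_Ioi
  intro r hr
  simp only [mem_Ioi] at hr
  have : Real.sqrt (2 * (r^2/2)) = r := by
    rw [show 2 * (r^2/2) = r^2 by ring, Real.sqrt_sq hr.le]
  simp only [smul_eq_mul, this]
  ring

lemma shift_integrableOn {h : ℝ → ℝ} {s : Set ℝ} (d : ℝ) (hi : IntegrableOn h s) :
    IntegrableOn (fun t => h (t + d)) ((fun t => t + d) ⁻¹' s) :=
  ((measurePreserving_add_right volume d).integrableOn_comp_preimage
    (measurableEmbedding_addRight d)).mpr hi

/-- Integrability workhorse. -/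
lemma int_work {μ : ℝ → ℝ} (hμc : Continuous μ) (hμpos : ∀ s, 0 ≤ μ s)
    (hμint : IntegrableOn (fun r => μ r * (1 + Real.sqrt r)) (Set.Ioi (0 : ℝ)))
    (b : ℝ) : IntegrableOn (fun t => Real.sqrt (2 * t) * μ (t - b)) (Ioi 0) := by
  set w : ℝ → ℝ := fun t => Real.sqrt (2 * t) * μ (t - b) with hw
  have hwc : Continuous w := ((continuous_sqrt.comp (by continuity)).mul
    (hμc.comp (by continuity)))
  set M : ℝ := |b| + 1 with hM
  have hM0 : 0 ≤ M := by positivity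
  have h1 : IntegrableOn w (Ioc 0 M) := hwc.integrableOn_Ioc
  have h2 : IntegrableOn w (Ioi M) := by
    -- dominated by K * (μ (t - b) * (1 + √(t - b)))
    set K : ℝ := Real.sqrt (2 * (1 + |b|)) with hK
    have hdom : IntegrableOn (fun t => K * (μ (t - b) * (1 + Real.sqrt (t - b)))) (Ioi M) := by
      apply Integrable.const_mul
      have := shift_integrableOn (-b) (hμint.mono_set (s := Ioi (M - b))
        (by intro x hx
            simp only [mem_Ioi] at hx ⊢
            have hMb : 1 ≤ M - b := by
              rw [hM]; cases abs_cases b with | inl h => linarith [h.1] | inr h => linarith [h.1]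
            linarith))
      rw [preimage_add_Ioi] at this
      simpa [sub_eq_add_neg, sub_sub_cancel] using this.integrable
    apply Integrable.mono hdom hwc.aestronglyMeasurable.restrict
    rw [ae_restrict_iff' measurableSet_Ioi]
    apply Filter.Eventually.of_forall
    intro t ht
    simp only [mem_Ioi] at ht
    have htb : 1 ≤ t - b := by
      cases abs_cases b with | inl h => rw [hM] at ht; linarith | inr h => rw [hM] at ht; linarith
    have h2t : Real.sqrt (2 * t) ≤ K * (1 + Real.sqrt (t - b)) := by
      have e1 : 2 * t ≤ (2 * (1 + |b|)) * (t - b) := by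
        cases abs_cases b with
        | inl h => nlinarith [h.1]
        | inr h => nlinarith [h.1]
      calc Real.sqrt (2 * t) ≤ Real.sqrt ((2 * (1 + |b|)) * (t - b)) := Real.sqrt_le_sqrt e1
        _ = K * Real.sqrt (t - b) := by
            rw [Real.sqrt_mul (by positivity)]
        _ ≤ K * (1 + Real.sqrt (t - b)) := by
            have : (0:ℝ) ≤ K := Real.sqrt_nonneg _
            nlinarith [Real.sqrt_nonneg (t - b)]
    have hμnn := hμpos (t - b)
    have hnn : 0 ≤ w t := mul_nonneg (Real.sqrt_nonneg _) hμnn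
    rw [Real.norm_of_nonneg hnn, Real.norm_of_nonneg (by positivity)]
    calc w t = Real.sqrt (2 * t) * μ (t - b) := rfl
      _ ≤ (K * (1 + Real.sqrt (t - b))) * μ (t - b) := by
          apply mul_le_mul_of_nonneg_right h2t hμnn
      _ = K * (μ (t - b) * (1 + Real.sqrt (t - b))) := by ring
  have : IntegrableOn w (Ioc 0 M ∪ Ioi M) := h1.union h2
  rwa [Ioc_union_Ioi_eq_Ioi hM0] at this

lemma J_mono {μ : ℝ → ℝ} (hμc : Continuous μ) (hμpos : ∀ s, 0 ≤ μ s)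
    (hμint : IntegrableOn (fun r => μ r * (1 + Real.sqrt r)) (Set.Ioi (0 : ℝ)))
    {b₁ b₂ : ℝ} (hb : b₁ ≤ b₂) :
    (∫ s in Ioi (0:ℝ), Real.sqrt (2*s) * μ (s - b₁)) ≤
      ∫ s in Ioi (0:ℝ), Real.sqrt (2*s) * μ (s - b₂) := by
  set d : ℝ := b₂ - b₁ with hd
  have hd0 : 0 ≤ d := by linarith
  -- translated integrand
  set u : ℝ → ℝ := fun t => Real.sqrt (2*(t+d)) * μ (t - b₁) with hu
  have hiu : IntegrableOn u (Ioi (-d)) := by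
    have h0 := shift_integrableOn d (int_work hμc hμpos hμint (b₁ + d))
    rw [preimage_add_Ioi] at h0
    have he : (fun t => Real.sqrt (2*(t+d)) * μ (t + d - (b₁ + d))) = u := by
      funext t; rw [hu]; congr 2; ring
    rw [zero_sub] at h0
    rwa [he] at h0
  have htr : (∫ s in Ioi (0:ℝ), Real.sqrt (2*s) * μ (s - b₂)) = ∫ t in Ioi (-d), u t := by
    rw [← shift_integral (fun s => Real.sqrt (2*s) * μ (s - b₂)) d (Ioi 0),
      preimage_add_Ioi, zero_sub]
    apply setIntegral_congr_fun measurableSet_Ioi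
    intro t _
    rw [hu]
    congr 2
    rw [hd]; ring
  rw [htr]
  have step1 : (∫ s in Ioi (0:ℝ), Real.sqrt (2*s) * μ (s - b₁)) ≤ ∫ t in Ioi (0:ℝ), u t := by
    apply setIntegral_mono_on (int_work hμc hμpos hμint b₁)
      (hiu.mono_set (Ioi_subset_Ioi (by linarith))) measurableSet_Ioi
    intro t ht
    simp only [mem_Ioi] at ht
    rw [hu]
    apply mul_le_mul_of_nonneg_right _ (hμpos _)
    apply Real.sqrt_le_sqrt
    linarith
  have step2 : (∫ t in Ioi (0:ℝ), u t) ≤ ∫ t in Ioi (-d), u t := by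
    apply setIntegral_mono_set hiu
    · exact Filter.Eventually.of_forall (fun t => mul_nonneg (Real.sqrt_nonneg _) (hμpos _))
    · exact (Ioi_subset_Ioi (by linarith)).eventuallyLE
  linarith

lemma g_mono {μ : ℝ → ℝ} (hμc : Continuous μ) (hμpos : ∀ s, 0 ≤ μ s)
    (hμint : IntegrableOn (fun r => μ r * (1 + Real.sqrt r)) (Set.Ioi (0 : ℝ))) :
    Monotone (fun b => ∫ v : EuclideanSpace ℝ (Fin 3), μ (‖v‖^2/2 - b)) := by
  intro b₁ b₂ hb
  simp only []
  rw [g_polar μ b₁, g_polar μ b₂, nsmul_eq_mul, nsmul_eq_mul, smul_eq_mul, smul_eq_mul]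
  apply mul_le_mul_of_nonneg_left _ (by norm_num : (0:ℝ) ≤ (3:ℕ))
  apply mul_le_mul_of_nonneg_left _ ENNReal.toReal_nonneg
  exact J_mono hμc hμpos hμint hb

/-- Second derivative test: at a global max, the second derivative is ≤ 0. -/
lemma sd_test {φ ψ : ℝ → ℝ} {c : ℝ} (hφ : ∀ t, HasDerivAt φ (ψ t) t)
    (hψ : HasDerivAt ψ c 0) (hmax : ∀ t, φ t ≤ φ 0) : c ≤ 0 := by
  by_contra hc
  push_neg at hc
  have hψ0 : ψ 0 = 0 := by
    have hloc : IsLocalMax φ 0 := Filter.Eventually.of_forall hmax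
    exact hloc.hasDerivAt_eq_zero (hφ 0)
  have hslope := hasDerivAt_iff_tendsto_slope.mp hψ
  have hev : ∀ᶠ t in nhdsWithin 0 {(0:ℝ)}ᶜ, c/2 < slope ψ 0 t :=
    hslope.eventually (eventually_gt_nhds (half_lt_self hc))
  rw [eventually_nhdsWithin_iff] at hev
  rcases Metric.eventually_nhds_iff.mp hev with ⟨ε, hε, hball⟩
  have hpos : ∀ t : ℝ, 0 < t → t < ε → 0 < ψ t := by
    intro t ht htε
    have h1 : c/2 < slope ψ 0 t := by
      apply hball (by simpa [abs_of_pos ht] using htε)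
      simp [ht.ne']
    rw [slope_def_field, hψ0] at h1
    have : 0 < ψ t / t := by
      have h2 : (0:ℝ) < c/2 := by positivity
      calc (0:ℝ) < c/2 := h2
        _ < (ψ t - 0)/(t - 0) := h1
        _ = ψ t / t := by ring_nf
    exact (div_pos_iff.mp this).resolve_right (fun h => absurd ht (not_lt.2 h.2.le)) |>.1
  have hmono : StrictMonoOn φ (Set.Icc 0 (ε/2)) := by
    apply strictMonoOn_of_deriv_pos (convex_Icc 0 (ε/2))
    · exact fun t _ => (hφ t).continuousAt.continuousWithinAt
    · intro t ht
      rw [interior_Icc] at ht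
      rw [(hφ t).deriv]
      exact hpos t ht.1 (lt_of_lt_of_le ht.2 (by linarith))
  have : φ 0 < φ (ε/2) :=
    hmono (Set.left_mem_Icc.2 (by linarith)) (Set.right_mem_Icc.2 (by linarith)) (by linarith)
  exact absurd (hmax (ε/2)) (not_le.2 this)


noncomputable def ee := EuclideanSpace.equiv (Fin 3) ℝ

lemma ee_apply (u : EuclideanSpace ℝ (Fin 3)) (i : Fin 3) : ee u i = u i := by unfold ee; simp

lemma ee_symm_apply (y : Fin 3 → ℝ) (i : Fin 3) : ee.symm y i = y i := by unfold ee; simp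

lemma ee_symm_single (i : Fin 3) :
    ee.symm (Pi.single i (1:ℝ)) = EuclideanSpace.single i 1 := by
  unfold ee; ext j; simp [EuclideanSpace.single_apply, Pi.single_apply]

lemma eucl_sum (u : EuclideanSpace ℝ (Fin 3)) :
    u = ∑ i, u i • EuclideanSpace.single i (1:ℝ) := by
  apply ee.injective
  rw [map_sum, pi_eq_sum_univ (ee u)]
  apply Finset.sum_congr rfl
  intro i _
  rw [_root_.map_smul]
  have h1 : ee u i = u i := ee_apply u i
  have h2 : ee (EuclideanSpace.single i (1:ℝ)) = fun j => if i = j then 1 else 0 := by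
    unfold ee; ext j; simp [EuclideanSpace.single_apply, eq_comm]
  rw [h1, h2]

lemma fderiv_translate {β : EuclideanSpace ℝ (Fin 3) → ℝ} (hβd : Differentiable ℝ β)
    (w : EuclideanSpace ℝ (Fin 3)) (hw : ∀ y, β (y + w) = β y) (x : EuclideanSpace ℝ (Fin 3)) :
    fderiv ℝ β (x + w) = fderiv ℝ β x := by
  have h2 : HasFDerivAt (fun y : EuclideanSpace ℝ (Fin 3) => y + w)
      (ContinuousLinearMap.id ℝ (EuclideanSpace ℝ (Fin 3))) x := (hasFDerivAt_id x).add_const w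
  have h1 : HasFDerivAt (fun y => β (y + w)) (fderiv ℝ β (x + w)) x := by
    exact ((hβd (x + w)).hasFDerivAt.comp x h2)
  rw [funext hw] at h1
  exact h1.fderiv.symm

/-- If `β` is C³, periodic, and `∑ ∂ᵢ∂ᵢ β = 0` everywhere, then `fderiv β = 0` on the cell. -/
lemma periodic_harmonic_fderiv_zero (T : Fin 3 → ℝ) (hT : ∀ i, 0 < T i)
    (β : EuclideanSpace ℝ (Fin 3) → ℝ) (hβ : ContDiff ℝ 3 β)
    (hper : ∀ (i : Fin 3) x, β (x + T i • EuclideanSpace.single i (1:ℝ)) = β x)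
    (hlap0 : ∀ x, ∑ i : Fin 3, fderiv ℝ (fderiv ℝ β) x (EuclideanSpace.single i (1:ℝ))
      (EuclideanSpace.single i (1:ℝ)) = 0) :
    ∀ y : EuclideanSpace ℝ (Fin 3), (∀ i, y i ∈ Icc 0 (T i)) → fderiv ℝ β y = 0 := by
  have hβd : Differentiable ℝ β := hβ.differentiable (by norm_num)
  have hD1 : ContDiff ℝ 2 (fderiv ℝ β) := hβ.fderiv_right (by norm_num)
  have hD1d : Differentiable ℝ (fderiv ℝ β) := hD1.differentiable (by norm_num)
  set sing : Fin 3 → EuclideanSpace ℝ (Fin 3) := fun i => EuclideanSpace.single i (1:ℝ)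
    with hsing
  set χ : Fin 3 → EuclideanSpace ℝ (Fin 3) → ℝ := fun i x => fderiv ℝ β x (sing i) with hχ
  have hχc : ∀ i, Continuous (χ i) := fun i => hD1.continuous.clm_apply continuous_const
  have hχd : ∀ (i) (x), HasFDerivAt (χ i) ((fderiv ℝ (fderiv ℝ β) x).flip (sing i)) x := by
    intro i x
    simpa using (hD1d x).hasFDerivAt.clm_apply (hasFDerivAt_const (sing i) x)
  set eeL : (Fin 3 → ℝ) →L[ℝ] EuclideanSpace ℝ (Fin 3) := (↑(ee.symm) :
    (Fin 3 → ℝ) →L[ℝ] EuclideanSpace ℝ (Fin 3)) with heeL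
  set F : Fin 3 → (Fin 3 → ℝ) → ℝ := fun i y => β (ee.symm y) * χ i (ee.symm y) with hF
  set F' : Fin 3 → (Fin 3 → ℝ) → ((Fin 3 → ℝ) →L[ℝ] ℝ) := fun i y =>
    β (ee.symm y) • (((fderiv ℝ (fderiv ℝ β) (ee.symm y)).flip (sing i)).comp eeL)
      + χ i (ee.symm y) • ((fderiv ℝ β (ee.symm y)).comp eeL) with hF'
  have hFd : ∀ (i) (y), HasFDerivAt (F i) (F' i y) y := by
    intro i y
    have h1 : HasFDerivAt (fun z => β (ee.symm z)) ((fderiv ℝ β (ee.symm y)).comp eeL) y := by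
      exact ((hβd (ee.symm y)).hasFDerivAt.comp y ee.symm.hasFDerivAt)
    have h2 : HasFDerivAt (fun z => χ i (ee.symm z))
        ((((fderiv ℝ (fderiv ℝ β) (ee.symm y)).flip (sing i))).comp eeL) y := by
      exact ((hχd i (ee.symm y)).comp y ee.symm.hasFDerivAt)
    exact h1.mul h2
  have hFval : ∀ (i) (y), F' i y (Pi.single i 1) =
      β (ee.symm y) * (fderiv ℝ (fderiv ℝ β) (ee.symm y) (sing i) (sing i))
        + (χ i (ee.symm y))^2 := by
    intro i y
    rw [hF']
    simp only [ContinuousLinearMap.add_apply, ContinuousLinearMap.smul_apply,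
      ContinuousLinearMap.comp_apply, ContinuousLinearMap.flip_apply, smul_eq_mul]
    have : eeL (Pi.single i 1) = sing i := by rw [heeL]; exact ee_symm_single i
    rw [this, hχ]
    ring
  have hdiv : ∀ y, (∑ i, F' i y (Pi.single i 1)) = ∑ i, (χ i (ee.symm y))^2 := by
    intro y
    calc (∑ i, F' i y (Pi.single i 1))
        = ∑ i, (β (ee.symm y) * (fderiv ℝ (fderiv ℝ β) (ee.symm y) (sing i) (sing i))
            + (χ i (ee.symm y))^2) := Finset.sum_congr rfl (fun i _ => hFval i y)
      _ = β (ee.symm y) * (∑ i, fderiv ℝ (fderiv ℝ β) (ee.symm y) (sing i) (sing i))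
            + ∑ i, (χ i (ee.symm y))^2 := by rw [Finset.sum_add_distrib, Finset.mul_sum]
      _ = ∑ i, (χ i (ee.symm y))^2 := by rw [hlap0 (ee.symm y), mul_zero, zero_add]
  have hQc : Continuous fun y => ∑ i, (χ i (ee.symm y))^2 := by
    apply continuous_finset_sum
    intro i _
    exact ((hχc i).comp ee.symm.continuous).pow 2
  have hle : (0 : Fin 3 → ℝ) ≤ T := fun i => (hT i).le
  have hmain := integral_divergence_of_hasFDerivAt_off_countable' 0 T hle F F' ∅
    countable_empty
    (fun i => ((hβ.continuous.comp ee.symm.continuous).mul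
      ((hχc i).comp ee.symm.continuous)).continuousOn)
    (fun y _ i => hFd i y)
    (by
      have heq : (fun y => ∑ i, F' i y (Pi.single i 1)) = fun y => ∑ i, (χ i (ee.symm y))^2 :=
        funext hdiv
      rw [show (fun x => ∑ i, F' i x (Pi.single i 1)) = fun y => ∑ i, (χ i (ee.symm y))^2 from
        funext hdiv]
      exact hQc.integrableOn_Icc)
  -- the face contributions cancel by periodicity
  have hfront : ∀ (i : Fin 3) (x : Fin 2 → ℝ),
      F i (Fin.insertNth (α := fun _ => ℝ) i (T i) x) = F i (Fin.insertNth (α := fun _ => ℝ) i ((0 : Fin 3 → ℝ) i) x) := by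
    intro i x
    have hsh : Fin.insertNth (α := fun _ => ℝ) i (T i) x
        = Fin.insertNth (α := fun _ => ℝ) i ((0 : Fin 3 → ℝ) i) x + T i • (Pi.single i (1:ℝ) : Fin 3 → ℝ) := by
      funext j
      refine Fin.succAboveCases i ?_ ?_ j
      · simp [Fin.insertNth_apply_same]
      · intro k
        simp [Fin.insertNth_apply_succAbove, Pi.single_eq_of_ne (Fin.succAbove_ne i k)]
    have hx' : ee.symm (Fin.insertNth (α := fun _ => ℝ) i ((0 : Fin 3 → ℝ) i) x + T i • (Pi.single i (1:ℝ) : Fin 3 → ℝ))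
        = ee.symm (Fin.insertNth (α := fun _ => ℝ) i ((0 : Fin 3 → ℝ) i) x) + T i • sing i := by
      rw [map_add, _root_.map_smul, ee_symm_single, hsing]
    have hχper : ∀ (z : EuclideanSpace ℝ (Fin 3)), χ i (z + T i • sing i) = χ i z := by
      intro z
      rw [hχ]
      simp only []
      rw [fderiv_translate hβd (T i • sing i) (fun w => hper i w) z]
    rw [hsh, hF]
    simp only []
    rw [hx', hper i, hχper]
  have hmain2 : (∫ y in Icc (0 : Fin 3 → ℝ) T, ∑ i, (χ i (ee.symm y))^2) = 0 := by
    rw [show (fun y => ∑ i, (χ i (ee.symm y))^2) = fun x => ∑ i, F' i x (Pi.single i 1) from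
      (funext hdiv).symm]
    rw [hmain]
    apply Finset.sum_eq_zero
    intro i _
    rw [show (fun x => F i (Fin.insertNth (α := fun _ => ℝ) i (T i) x))
        = fun x => F i (Fin.insertNth (α := fun _ => ℝ) i ((0 : Fin 3 → ℝ) i) x) from funext (hfront i)]
    exact sub_self _
  -- the (continuous, nonnegative) integrand vanishes on the cell
  set Q : (Fin 3 → ℝ) → ℝ := fun y => ∑ i, (χ i (ee.symm y))^2 with hQ
  have hQnn : ∀ y, 0 ≤ Q y := fun y => Finset.sum_nonneg fun i _ => sq_nonneg _
  have hae : Q =ᵐ[volume.restrict (Icc (0 : Fin 3 → ℝ) T)] 0 := by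
    rw [← integral_eq_zero_iff_of_nonneg (fun y => hQnn y) hQc.integrableOn_Icc]
    exact hmain2
  have hnull : volume ({y | Q y ≠ 0} ∩ Icc (0 : Fin 3 → ℝ) T) = 0 := by
    have hms : MeasurableSet {y | Q y ≠ 0} :=
      (measurableSet_singleton (0:ℝ)).compl.preimage hQc.measurable
    have h1 : (volume.restrict (Icc (0 : Fin 3 → ℝ) T)) {y | ¬ Q y = 0} = 0 := by
      have := hae
      rw [Filter.EventuallyEq, ae_iff] at this
      simpa using this
    rwa [Measure.restrict_apply hms] at h1
  have hopen0 : ∀ y ∈ Set.pi univ (fun i => Ioo (0:ℝ) (T i)), Q y = 0 := by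
    intro y hy
    by_contra hne
    have hVopen : IsOpen ((Set.pi univ (fun i => Ioo (0:ℝ) (T i))) ∩ Q ⁻¹' ({(0:ℝ)}ᶜ)) :=
      (isOpen_set_pi finite_univ (fun i _ => isOpen_Ioo)).inter
        (isOpen_compl_singleton.preimage hQc)
    have hVpos : 0 < volume ((Set.pi univ (fun i => Ioo (0:ℝ) (T i))) ∩ Q ⁻¹' ({(0:ℝ)}ᶜ)) :=
      hVopen.measure_pos volume ⟨y, hy, hne⟩
    have hsub : (Set.pi univ (fun i => Ioo (0:ℝ) (T i))) ∩ Q ⁻¹' ({(0:ℝ)}ᶜ)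
        ⊆ {y | Q y ≠ 0} ∩ Icc (0 : Fin 3 → ℝ) T := by
      rintro z ⟨hz1, hz2⟩
      refine ⟨hz2, ⟨fun i => (hz1 i (mem_univ i)).1.le, fun i => (hz1 i (mem_univ i)).2.le⟩⟩
    exact absurd (measure_mono_null hsub hnull) hVpos.ne'
  have hIcc0 : ∀ y ∈ Icc (0 : Fin 3 → ℝ) T, Q y = 0 := by
    have hcl : closure (Set.pi univ (fun i => Ioo (0:ℝ) (T i))) = Icc (0 : Fin 3 → ℝ) T := by
      rw [closure_pi_set]
      rw [show (fun i => closure (Ioo (0:ℝ) (T i))) = fun i => Icc (0:ℝ) (T i) from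
        funext fun i => closure_Ioo (hT i).ne]
      exact Set.pi_univ_Icc 0 T
    intro y hy
    have := (Set.EqOn.closure (fun z hz => hopen0 z hz) hQc continuous_const)
      (by rw [hcl]; exact hy)
    simpa using this
  -- conclude
  intro y hy
  have hyIcc : (ee y : Fin 3 → ℝ) ∈ Icc (0 : Fin 3 → ℝ) T :=
    ⟨fun i => by rw [ee_apply]; exact (hy i).1, fun i => by rw [ee_apply]; exact (hy i).2⟩
  have h0 := hIcc0 (ee y) hyIcc
  rw [hQ] at h0
  simp only [ContinuousLinearEquiv.symm_apply_apply] at h0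
  have hz : ∀ i, χ i y = 0 := by
    intro i
    have := (Finset.sum_eq_zero_iff_of_nonneg (fun i _ => sq_nonneg (χ i y))).mp h0 i
      (Finset.mem_univ i)
    exact (pow_eq_zero_iff two_ne_zero).mp this
  apply ContinuousLinearMap.ext
  intro u
  rw [ContinuousLinearMap.zero_apply]
  conv_lhs => rw [eucl_sum u]
  rw [map_sum]
  apply Finset.sum_eq_zero
  intro i _
  rw [ContinuousLinearMap.map_smul]
  have : fderiv ℝ β y (sing i) = 0 := hz i
  rw [show EuclideanSpace.single i (1:ℝ) = sing i from rfl, this, smul_zero]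

/-- The Laplacian of `β : ℝ³ → ℝ`, as the sum of second partial derivatives. -/
noncomputable def lap3 (β : EuclideanSpace ℝ (Fin 3) → ℝ) (x : EuclideanSpace ℝ (Fin 3)) : ℝ :=
  ∑ i : Fin 3, iteratedFDeriv ℝ 2 β x ![EuclideanSpace.single i 1, EuclideanSpace.single i 1]

/-- Non-existence of genuinely 3D radial BGK waves: if `μ : ℝ → ℝ` is `C¹`, nonnegative, with
`∫₀^∞ μ(r)(1 + √r) dr < ∞`, `β : ℝ³ → ℝ` is `C³`, periodic with periods `T₁, T₂, T₃`, and
satisfies `−Δβ(x) = 1 − ∫_{ℝ³} μ(|v|²/2 − β(x)) dv` for all `x`, then `∇β ≡ 0`. -/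
theorem stmt_2 (T₁ T₂ T₃ : ℝ) (hT₁ : 0 < T₁) (hT₂ : 0 < T₂) (hT₃ : 0 < T₃)
    (μ : ℝ → ℝ) (hμreg : ContDiff ℝ 1 μ) (hμpos : ∀ s, 0 ≤ μ s)
    (hμint : IntegrableOn (fun r => μ r * (1 + Real.sqrt r)) (Set.Ioi (0 : ℝ)))
    (β : EuclideanSpace ℝ (Fin 3) → ℝ) (hβ : ContDiff ℝ 3 β)
    (hper1 : ∀ x, β (x + T₁ • EuclideanSpace.single (0 : Fin 3) (1 : ℝ)) = β x)
    (hper2 : ∀ x, β (x + T₂ • EuclideanSpace.single (1 : Fin 3) (1 : ℝ)) = β x)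
    (hper3 : ∀ x, β (x + T₃ • EuclideanSpace.single (2 : Fin 3) (1 : ℝ)) = β x)
    (hPoisson : ∀ x, -lap3 β x = 1 - ∫ v : EuclideanSpace ℝ (Fin 3), μ (‖v‖ ^ 2 / 2 - β x)) :
    ∀ x, gradient β x = 0 := by
  set T : Fin 3 → ℝ := ![T₁, T₂, T₃] with hTdef
  have hT : ∀ i, 0 < T i := by
    intro i; fin_cases i <;> simpa [hTdef]
  set sing : Fin 3 → (EuclideanSpace ℝ (Fin 3)) := fun i => EuclideanSpace.single i (1:ℝ) with hsing
  set vv : Fin 3 → (EuclideanSpace ℝ (Fin 3)) := fun i => T i • sing i with hvv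
  have hper : ∀ (i : Fin 3) x, β (x + vv i) = β x := by
    intro i; fin_cases i
    · intro x; simpa [hvv, hsing, hTdef] using hper1 x
    · intro x; simpa [hvv, hsing, hTdef] using hper2 x
    · intro x; simpa [hvv, hsing, hTdef] using hper3 x
  have hβd : Differentiable ℝ β := hβ.differentiable (by norm_num)
  have hD1 : ContDiff ℝ 2 (fderiv ℝ β) := hβ.fderiv_right (by norm_num)
  have hD1d : Differentiable ℝ (fderiv ℝ β) := hD1.differentiable (by norm_num)
  -- iterated periodicity
  have hperZ : ∀ (i : Fin 3) (k : ℤ) (x : (EuclideanSpace ℝ (Fin 3))), β (x + k • vv i) = β x := by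
    intro i k
    induction k using Int.induction_on with
    | zero => intro x; simp
    | succ n ih =>
        intro x
        have h1 : x + ((n : ℤ) + 1) • vv i = (x + vv i) + (n : ℤ) • vv i := by
          rw [add_smul, one_smul]; abel
        rw [h1, ih, hper]
    | pred n ih =>
        intro x
        have h1 : x + (-(n : ℤ) - 1) • vv i + vv i = x + (-(n:ℤ)) • vv i := by
          rw [sub_smul, one_smul]; abel
        have := hper i (x + (-(n : ℤ) - 1) • vv i)
        rw [h1] at this
        rw [← this, ih]
  -- translation invariance of fderiv under periods
  have htrans : ∀ (w : (EuclideanSpace ℝ (Fin 3))), (∀ y, β (y + w) = β y) → ∀ x, fderiv ℝ β (x + w) = fderiv ℝ β x := by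
    intro w hw x
    have h2 : HasFDerivAt (fun y : (EuclideanSpace ℝ (Fin 3)) => y + w) (ContinuousLinearMap.id ℝ (EuclideanSpace ℝ (Fin 3))) x :=
      (hasFDerivAt_id x).add_const w
    have h1 : HasFDerivAt (fun y => β (y + w)) (fderiv ℝ β (x + w)) x := by
      exact ((hβd (x + w)).hasFDerivAt.comp x h2)
    rw [funext hw] at h1
    exact h1.fderiv.symm
  -- reduction to the fundamental cell
  have hreduce : ∀ x : (EuclideanSpace ℝ (Fin 3)), ∃ y : (EuclideanSpace ℝ (Fin 3)), (∀ i, y i ∈ Set.Ico 0 (T i)) ∧ β y = β x ∧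
      fderiv ℝ β y = fderiv ℝ β x := by
    intro x
    set k : Fin 3 → ℤ := fun i => ⌊x i / T i⌋ with hk
    set y : (EuclideanSpace ℝ (Fin 3)) := x + (-(k 0)) • vv 0 + (-(k 1)) • vv 1 + (-(k 2)) • vv 2 with hy
    have hco : ∀ j, y j = x j - (k j : ℝ) * T j := by
      intro j
      have hz : ∀ (m : ℤ) (w : (EuclideanSpace ℝ (Fin 3))) (j : Fin 3), (m • w) j = (m : ℝ) * w j := by
        intro m w j
        rw [show (m • w) = (m : ℝ) • w from (Int.cast_smul_eq_zsmul ℝ m w).symm]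
        simp
      have hvj : ∀ i j, (vv i) j = if j = i then T i else 0 := by
        intro i j
        simp [hvv, hsing, EuclideanSpace.single_apply, mul_ite]
      fin_cases j <;>
        simp [hy, PiLp.add_apply, PiLp.neg_apply, hz, hvj] <;> ring
    have hval : β y = β x := by
      rw [hy, hperZ, hperZ, hperZ]
    have hfd : fderiv ℝ β y = fderiv ℝ β x := by
      rw [hy, htrans _ (fun z => hperZ 2 _ z), htrans _ (fun z => hperZ 1 _ z),
        htrans _ (fun z => hperZ 0 _ z)]
    refine ⟨y, ?_, hval, hfd⟩
    intro j
    rw [hco j]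
    constructor
    · have h1 : (k j : ℝ) ≤ x j / T j := Int.floor_le _
      have := mul_le_mul_of_nonneg_right h1 (hT j).le
      rw [div_mul_cancel₀ _ (hT j).ne'] at this
      linarith
    · have h1 : x j / T j < (k j : ℝ) + 1 := Int.lt_floor_add_one _
      have := mul_lt_mul_of_pos_right h1 (hT j)
      rw [div_mul_cancel₀ _ (hT j).ne'] at this
      linarith
  -- compact fundamental cell and existence of global max/min
  set K : Set (EuclideanSpace ℝ (Fin 3)) := {y | ∀ i, y i ∈ Set.Icc 0 (T i)} with hKdef
  have hKc : IsCompact K := by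
    have h1 : K = (EuclideanSpace.equiv (Fin 3) ℝ) ⁻¹' (Set.pi Set.univ fun i => Icc 0 (T i)) := by
      ext y; simp [hKdef, Set.mem_pi, Pi.le_def, forall_and]
    rw [h1]
    exact (Homeomorph.isCompact_preimage
      (EuclideanSpace.equiv (Fin 3) ℝ).toHomeomorph).mpr (isCompact_univ_pi fun i => isCompact_Icc)
  have hKne : K.Nonempty := ⟨0, fun i => by simp [(hT i).le]⟩
  obtain ⟨xM, _, hxM⟩ := hKc.exists_isMaxOn hKne (hβ.continuous.continuousOn)
  obtain ⟨xm, _, hxm⟩ := hKc.exists_isMinOn hKne (hβ.continuous.continuousOn)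
  have hMg : ∀ x, β x ≤ β xM := by
    intro x
    obtain ⟨y, hy, hval, -⟩ := hreduce x
    rw [← hval]
    exact hxM (fun i => ⟨(hy i).1, (hy i).2.le⟩)
  have hmg : ∀ x, β xm ≤ β x := by
    intro x
    obtain ⟨y, hy, hval, -⟩ := hreduce x
    rw [← hval]
    exact hxm (fun i => ⟨(hy i).1, (hy i).2.le⟩)
  -- second derivative facts along coordinate lines
  have hline : ∀ (p s : EuclideanSpace ℝ (Fin 3)),
      (∀ t : ℝ, HasDerivAt (fun t : ℝ => β (p + t • s)) (fderiv ℝ β (p + t • s) s) t) ∧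
        HasDerivAt (fun t : ℝ => fderiv ℝ β (p + t • s) s)
          (fderiv ℝ (fderiv ℝ β) p s s) 0 := by
    intro p s
    have hγ : ∀ t : ℝ, HasDerivAt (fun t : ℝ => p + t • s) s t := fun t => by
      simpa using ((hasDerivAt_id t).smul_const s).const_add p
    constructor
    · intro t
      exact (hβd (p + t • s)).hasFDerivAt.comp_hasDerivAt t (hγ t)
    · have hF : HasDerivAt (fun t : ℝ => fderiv ℝ β (p + t • s))
          (fderiv ℝ (fderiv ℝ β) p s) 0 := by
        have := (hD1d (p + (0:ℝ) • s)).hasFDerivAt.comp_hasDerivAt 0 (hγ 0)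
        simpa [Function.comp_def] using this
      have := hF.clm_apply (hasDerivAt_const (0:ℝ) s)
      simpa using this
  have hlap_eq : ∀ p, lap3 β p = ∑ i : Fin 3,
      fderiv ℝ (fderiv ℝ β) p (sing i) (sing i) := by
    intro p
    unfold lap3
    apply Finset.sum_congr rfl
    intro i _
    rw [iteratedFDeriv_two_apply]
    simp [hsing]
  -- lap3 vanishes identically
  have hlap0 : ∀ x, lap3 β x = 0 := by
    have hMle : lap3 β xM ≤ 0 := by
      rw [hlap_eq]
      apply Finset.sum_nonpos
      intro i _
      obtain ⟨h1, h2⟩ := hline xM (sing i)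
      apply sd_test h1 h2
      intro t
      simpa using hMg (xM + t • sing i)
    have hmge : 0 ≤ lap3 β xm := by
      rw [hlap_eq]
      apply Finset.sum_nonneg
      intro i _
      obtain ⟨h1, h2⟩ := hline xm (sing i)
      have hneg := sd_test (fun t => (h1 t).neg) h2.neg
        (fun t => by simpa using hmg (xm + t • sing i))
      linarith
    have hgval : ∀ x, (∫ v : EuclideanSpace ℝ (Fin 3), μ (‖v‖ ^ 2 / 2 - β x))
        = 1 + lap3 β x := by
      intro x; have := hPoisson x; linarith
    have hgm := g_mono hμreg.continuous hμpos hμint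
    intro x
    have h1 : (∫ v : EuclideanSpace ℝ (Fin 3), μ (‖v‖ ^ 2 / 2 - β x)) ≤ 1 := by
      calc (∫ v : EuclideanSpace ℝ (Fin 3), μ (‖v‖ ^ 2 / 2 - β x))
          ≤ ∫ v : EuclideanSpace ℝ (Fin 3), μ (‖v‖ ^ 2 / 2 - β xM) := hgm (hMg x)
        _ = 1 + lap3 β xM := hgval xM
        _ ≤ 1 := by linarith
    have h2 : 1 ≤ (∫ v : EuclideanSpace ℝ (Fin 3), μ (‖v‖ ^ 2 / 2 - β x)) := by
      calc (1:ℝ) ≤ 1 + lap3 β xm := by linarith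
        _ = ∫ v : EuclideanSpace ℝ (Fin 3), μ (‖v‖ ^ 2 / 2 - β xm) := (hgval xm).symm
        _ ≤ ∫ v : EuclideanSpace ℝ (Fin 3), μ (‖v‖ ^ 2 / 2 - β x) := hgm (hmg x)
    have := hgval x
    linarith
    -- conclude via the divergence-theorem lemma
  have hlap_sum : ∀ x, ∑ i : Fin 3, fderiv ℝ (fderiv ℝ β) x (EuclideanSpace.single i (1:ℝ))
      (EuclideanSpace.single i (1:ℝ)) = 0 := by
    intro x
    have h := hlap0 x
    rw [hlap_eq] at h
    simpa [hsing] using h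
  have hper' : ∀ (i : Fin 3) x, β (x + T i • EuclideanSpace.single i (1:ℝ)) = β x := by
    intro i x
    simpa [hvv, hsing] using hper i x
  have hcell := periodic_harmonic_fderiv_zero T hT β hβ hper' hlap_sum
  intro x
  obtain ⟨y, hy, -, hfd⟩ := hreduce x
  have h0 : fderiv ℝ β x = 0 := by
    rw [← hfd]
    exact hcell y (fun i => ⟨(hy i).1, (hy i).2.le⟩)
  unfold gradient
  rw [h0, map_zero]
end

section
/- Let μ : ℝ → ℝ be continuous and nonnegative with ∫₀^∞ μ(r)(1 + √r) dr < ∞. Then the function G : ℝ → ℝ defined by G(β) = ∫_{ℝ³} μ(|v|²/2 − β) dv is differentiable with G′(β) = 2√2 π ∫_{−β}^{∞} μ(u) (u + β)^{−1/2} du ≥ 0 for every β ∈ ℝ. In particular, g(β) = 1 − ∫_{ℝ³} μ(|v|²/2 − β) dv satisfies g′(β) ≤ 0 for all β. -/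
open MeasureTheory Real

namespace Stmt7Aux

open Set

lemma rpow_negHalf_nonpos {x : ℝ} (hx : x ≤ 0) : x ^ (-(1:ℝ)/2) = 0 := by
  rcases lt_or_eq_of_le hx with h | h
  · rw [Real.rpow_def_of_neg h]
    have : (-(1:ℝ)/2) * π = -(π/2) := by ring
    rw [this, Real.cos_neg, Real.cos_pi_div_two, mul_zero]
  · rw [h, Real.zero_rpow (by norm_num)]

lemma rpow_negHalf_nonneg (x : ℝ) : 0 ≤ x ^ (-(1:ℝ)/2) := by
  rcases le_or_gt x 0 with h | h
  · rw [rpow_negHalf_nonpos h]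
  · exact (Real.rpow_pos_of_pos h _).le

lemma rpow_negHalf_eq (x : ℝ) : x ^ (-(1:ℝ)/2) = (Real.sqrt x)⁻¹ := by
  rcases le_or_gt x 0 with h | h
  · rw [rpow_negHalf_nonpos h, Real.sqrt_eq_zero'.mpr h, inv_zero]
  · rw [show -(1:ℝ)/2 = -(1/2) by ring, Real.rpow_neg h.le, ← Real.sqrt_eq_rpow]

lemma meas_rpowNegHalf (t : ℝ) : Measurable (fun u : ℝ => (u + t) ^ (-(1:ℝ)/2)) := by
  simp only [rpow_negHalf_eq]
  exact ((Real.continuous_sqrt.comp (continuous_id.add continuous_const)).measurable).inv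

lemma sqrt_add_le (x y : ℝ) (hx : 0 ≤ x) (hy : 0 ≤ y) :
    Real.sqrt (x + y) ≤ Real.sqrt x + Real.sqrt y := by
  have h : x + y ≤ (Real.sqrt x + Real.sqrt y)^2 := by
    have hx' := Real.sq_sqrt hx
    have hy' := Real.sq_sqrt hy
    nlinarith [Real.sqrt_nonneg x, Real.sqrt_nonneg y,
      mul_nonneg (Real.sqrt_nonneg x) (Real.sqrt_nonneg y)]
  calc Real.sqrt (x+y) ≤ Real.sqrt ((Real.sqrt x + Real.sqrt y)^2) := Real.sqrt_le_sqrt h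
    _ = Real.sqrt x + Real.sqrt y := Real.sqrt_sq (by positivity)

lemma shift_Ioi (h : ℝ → ℝ) (a c : ℝ) : ∫ u in Ioi a, h (u + c) = ∫ u in Ioi (a + c), h u := by
  have := (measurePreserving_add_right volume c).setIntegral_preimage_emb
    (measurableEmbedding_addRight c) h (Ioi (a + c))
  simpa using this

lemma shift_Ioc (h : ℝ → ℝ) (a b c : ℝ) :
    ∫ u in Ioc a b, h (u + c) = ∫ u in Ioc (a+c) (b+c), h u := by
  have := (measurePreserving_add_right volume c).setIntegral_preimage_emb
    (measurableEmbedding_addRight c) h (Ioc (a+c) (b+c))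
  simpa using this

lemma subst_sq (g : ℝ → ℝ) :
    ∫ u in Ioi (0:ℝ), g u = ∫ x in Ioi (0:ℝ), |x| * g (x^2/2) := by
  have himg : (fun x : ℝ => x^2/2) '' Ioi 0 = Ioi 0 := by
    ext u; constructor
    · rintro ⟨x, hx, rfl⟩; exact div_pos (pow_pos (mem_Ioi.mp hx) 2) (by norm_num)
    · intro hu
      refine ⟨Real.sqrt (2*u), Real.sqrt_pos.mpr (by linarith [hu.out]), ?_⟩
      show Real.sqrt (2*u) ^ 2 / 2 = u
      rw [Real.sq_sqrt (by linarith [hu.out] : (0:ℝ) ≤ 2*u)]; ring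
  have hinj : InjOn (fun x : ℝ => x^2/2) (Ioi 0) := by
    intro x hx y hy hxy
    have h2 : (x - y) * (x + y) = 0 := by
      have : x^2 = y^2 := by
        have : x^2/2 = y^2/2 := hxy
        linarith
      nlinarith
    rcases mul_eq_zero.mp h2 with h | h
    · linarith
    · exfalso; have := hx.out; have := hy.out; linarith
  have key := integral_image_eq_integral_abs_deriv_smul (measurableSet_Ioi (a := (0:ℝ)))
    (f' := fun x : ℝ => x)
    (fun x _ => ((hasDerivAt_pow 2 x).div_const 2).hasDerivWithinAt.congr_deriv
      (by push_cast; ring)) hinj g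
  rw [himg] at key
  simpa [smul_eq_mul] using key

lemma ball_vol : (volume (Metric.ball (0:EuclideanSpace ℝ (Fin 3)) 1)).toReal = 4 * π / 3 := by
  rw [EuclideanSpace.volume_ball]
  have h32 : Real.Gamma ((3:ℝ)/2 + 1) = 3/4 * Real.sqrt π := by
    rw [Real.Gamma_add_one (by norm_num)]
    have : (3:ℝ)/2 = 1/2 + 1 := by norm_num
    rw [this, Real.Gamma_add_one (by norm_num), Real.Gamma_one_half_eq]
    ring
  have hs : Real.sqrt π ^ 3 = π * Real.sqrt π := by
    have : Real.sqrt π ^ 3 = Real.sqrt π ^ 2 * Real.sqrt π := by ring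
    rw [this, Real.sq_sqrt Real.pi_pos.le]
  have hsp : Real.sqrt π > 0 := Real.sqrt_pos.mpr Real.pi_pos
  rw [Fintype.card_fin]
  push_cast
  rw [h32, hs]
  rw [ENNReal.ofReal_one, one_pow, one_mul, ENNReal.toReal_ofReal (by positivity)]
  field_simp

lemma polar (f : ℝ → ℝ) :
    ∫ v : EuclideanSpace ℝ (Fin 3), f ‖v‖ =
      (4 * π) * ∫ y in Ioi (0:ℝ), y ^ 2 * f y := by
  rw [integral_fun_norm_addHaar (volume : Measure (EuclideanSpace ℝ (Fin 3))) f]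
  have hdim : Module.finrank ℝ (EuclideanSpace ℝ (Fin 3)) = 3 := by
    simp [finrank_euclideanSpace]
  rw [hdim, measureReal_def, ball_vol, nsmul_eq_mul, smul_eq_mul, ← mul_assoc]
  have h3 : (3:ℕ) * (4 * π / 3) = 4 * π := by push_cast; ring
  rw [h3]
  congr 1

variable {μ : ℝ → ℝ}

lemma stepA (hμc : Continuous μ) (c : ℝ) :
    ∫ v : EuclideanSpace ℝ (Fin 3), μ (‖v‖ ^ 2 / 2 - c)
      = (4 * Real.sqrt 2 * π) * ∫ u, μ u * Real.sqrt (u + c) := by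
  have h1 := polar (fun y => μ (y^2/2 - c))
  rw [show (fun v : EuclideanSpace ℝ (Fin 3) => μ (‖v‖ ^ 2 / 2 - c))
    = fun v : EuclideanSpace ℝ (Fin 3) => (fun y => μ (y^2/2 - c)) ‖v‖ from rfl, h1]
  have h2 := subst_sq (fun u => Real.sqrt (2*u) * μ (u - c))
  have h3 : ∀ x : ℝ, |x| * (Real.sqrt (2*(x^2/2)) * μ (x^2/2 - c)) = x^2 * μ (x^2/2 - c) := by
    intro x
    have : (2:ℝ)*(x^2/2) = x^2 := by ring
    rw [this, Real.sqrt_sq_eq_abs, ← mul_assoc, abs_mul_abs_self]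
    ring
  have h4 : ∫ y in Ioi (0:ℝ), y^2 * μ (y^2/2 - c)
      = ∫ u in Ioi (0:ℝ), Real.sqrt (2*u) * μ (u - c) := by
    rw [h2]
    refine setIntegral_congr_fun measurableSet_Ioi fun x _ => ?_
    exact (h3 x).symm
  have h5 : ∫ u in Ioi (0:ℝ), Real.sqrt (2*u) * μ (u - c)
      = Real.sqrt 2 * ∫ u in Ioi (0:ℝ), Real.sqrt u * μ (u - c) := by
    rw [← integral_const_mul]
    refine setIntegral_congr_fun measurableSet_Ioi fun u _ => ?_
    rw [Real.sqrt_mul (by norm_num) u, mul_assoc]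
  have h6 : ∫ u in Ioi (0:ℝ), Real.sqrt u * μ (u - c)
      = ∫ u in Ioi (-c), Real.sqrt (u + c) * μ u := by
    have := shift_Ioi (fun u => Real.sqrt u * μ (u - c)) (-c) c
    simp only [neg_add_cancel] at this
    rw [← this]
    refine setIntegral_congr_fun measurableSet_Ioi fun u _ => ?_
    simp [add_sub_cancel_right]
  have h7 : ∫ u in Ioi (-c), Real.sqrt (u + c) * μ u = ∫ u, μ u * Real.sqrt (u + c) := by
    rw [show (fun u => Real.sqrt (u + c) * μ u) = fun u => μ u * Real.sqrt (u + c) from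
      funext fun u => mul_comm _ _]
    apply setIntegral_eq_integral_of_forall_compl_eq_zero
    intro u hu
    have : u + c ≤ 0 := by
      simp only [mem_Ioi, not_lt] at hu; linarith
    simp [Real.sqrt_eq_zero'.mpr this]
  rw [h4, h5, h6, h7]
  ring

lemma int_sqrt (hμc : Continuous μ) (hμpos : ∀ r, 0 ≤ μ r)
    (hμint : IntegrableOn (fun r => μ r * (1 + Real.sqrt r)) (Set.Ioi (0:ℝ))) (c : ℝ) :
    Integrable (fun u => μ u * Real.sqrt (u + c)) := by
  have hcont : Continuous (fun u => μ u * Real.sqrt (u + c)) :=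
    hμc.mul (Real.continuous_sqrt.comp (continuous_id.add continuous_const))
  rw [← integrableOn_univ, ← Iic_union_Ioi (a := (0:ℝ))]
  apply IntegrableOn.union
  · have hsub : Iic (0:ℝ) ⊆ Iic (-|c| - 1) ∪ Icc (-|c| - 1) 0 := by
      intro x hx
      rcases le_or_gt x (-|c| - 1) with h | h
      · exact Or.inl h
      · exact Or.inr ⟨h.le, hx⟩
    refine IntegrableOn.mono_set (IntegrableOn.union ?_ ?_) hsub
    · refine (integrableOn_congr_fun (g := fun _ => (0:ℝ)) ?_ measurableSet_Iic).mpr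
        integrableOn_zero
      intro u hu
      have h1 : u + c ≤ 0 := by
        have := le_abs_self c
        simp only [mem_Iic] at hu
        linarith
      simp [Real.sqrt_eq_zero' , h1]
    · exact hcont.integrableOn_Icc
  · refine Integrable.mono ((hμint.const_mul (1 + Real.sqrt |c|)))
      hcont.aestronglyMeasurable.restrict ?_
    refine (ae_restrict_iff' measurableSet_Ioi).mpr (ae_of_all _ fun u hu => ?_)
    have hu0 : (0:ℝ) < u := hu
    have h1 : Real.sqrt (u + c) ≤ Real.sqrt u + Real.sqrt |c| := by
      calc Real.sqrt (u + c) ≤ Real.sqrt (u + |c|) :=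
            Real.sqrt_le_sqrt (by linarith [le_abs_self c])
        _ ≤ Real.sqrt u + Real.sqrt |c| := sqrt_add_le u |c| hu0.le (abs_nonneg c)
    have h2 : μ u * Real.sqrt (u + c) ≤ (1 + Real.sqrt |c|) * (μ u * (1 + Real.sqrt u)) := by
      have h3 : Real.sqrt u + Real.sqrt |c| ≤ (1 + Real.sqrt |c|) * (1 + Real.sqrt u) := by
        nlinarith [Real.sqrt_nonneg u, Real.sqrt_nonneg |c|]
      calc μ u * Real.sqrt (u + c) ≤ μ u * (Real.sqrt u + Real.sqrt |c|) :=
            mul_le_mul_of_nonneg_left h1 (hμpos u)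
        _ ≤ μ u * ((1 + Real.sqrt |c|) * (1 + Real.sqrt u)) :=
            mul_le_mul_of_nonneg_left h3 (hμpos u)
        _ = (1 + Real.sqrt |c|) * (μ u * (1 + Real.sqrt u)) := by ring
    rw [Real.norm_eq_abs, Real.norm_eq_abs,
      abs_of_nonneg (mul_nonneg (hμpos u) (Real.sqrt_nonneg _)),
      abs_of_nonneg (mul_nonneg (by positivity) (mul_nonneg (hμpos u) (by positivity)))]
    exact h2

lemma int_rpow (hμc : Continuous μ) (hμpos : ∀ r, 0 ≤ μ r)
    (hμint : IntegrableOn (fun r => μ r * (1 + Real.sqrt r)) (Set.Ioi (0:ℝ))) (t : ℝ) :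
    Integrable (fun u => μ u * (u + t) ^ (-(1:ℝ)/2)) := by
  set b₀ : ℝ := max (1 - t) 1 with hb₀
  have hb₀1 : (1:ℝ) ≤ b₀ := le_max_right _ _
  have hb₀t : 1 - t ≤ b₀ := le_max_left _ _
  have hmeas : AEStronglyMeasurable (fun u => μ u * (u + t) ^ (-(1:ℝ)/2)) volume :=
    (hμc.measurable.mul (meas_rpowNegHalf t)).aestronglyMeasurable
  rw [← integrableOn_univ, ← Iic_union_Ioi (a := b₀)]
  apply IntegrableOn.union
  · have htb : -t ≤ b₀ := by linarith
    rw [← Iic_union_Ioc_eq_Iic htb]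
    apply IntegrableOn.union
    · refine (integrableOn_congr_fun (g := fun _ => (0:ℝ)) ?_ measurableSet_Iic).mpr
        integrableOn_zero
      intro u hu
      have h1 : u + t ≤ 0 := by
        simp only [mem_Iic] at hu; linarith
      simp [rpow_negHalf_nonpos h1]
    · obtain ⟨M, hM⟩ := (isCompact_Icc (a := -t) (b := b₀)).exists_bound_of_continuousOn
        hμc.continuousOn
      have hint2 : IntegrableOn (fun u => (u + t) ^ (-(1:ℝ)/2)) (Ioc (-t) b₀) := by
        have h1 : IntervalIntegrable (fun x : ℝ => x ^ (-(1:ℝ)/2)) volume 0 (b₀ + t) :=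
          intervalIntegral.intervalIntegrable_rpow' (by norm_num)
        have h2 := h1.comp_add_right t
        rw [zero_sub, add_sub_cancel_right] at h2
        exact (intervalIntegrable_iff_integrableOn_Ioc_of_le htb).mp h2
      refine Integrable.mono (hint2.const_mul (max M 0)) hmeas.restrict ?_
      refine (ae_restrict_iff' measurableSet_Ioc).mpr (ae_of_all _ fun u hu => ?_)
      have hMu : μ u ≤ max M 0 := by
        have := hM u ⟨hu.1.le, hu.2⟩
        have h2 : |μ u| ≤ M := by rwa [Real.norm_eq_abs] at this
        calc μ u ≤ |μ u| := le_abs_self _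
          _ ≤ M := h2
          _ ≤ max M 0 := le_max_left _ _
      rw [Real.norm_eq_abs, Real.norm_eq_abs,
        abs_of_nonneg (mul_nonneg (hμpos u) (rpow_negHalf_nonneg _)),
        abs_of_nonneg (mul_nonneg (le_max_right M 0) (rpow_negHalf_nonneg _))]
      exact mul_le_mul_of_nonneg_right hMu (rpow_negHalf_nonneg _)
  · refine Integrable.mono (hμint.mono_set (Ioi_subset_Ioi (by linarith : (0:ℝ) ≤ b₀)))
      hmeas.restrict ?_
    refine (ae_restrict_iff' measurableSet_Ioi).mpr (ae_of_all _ fun u hu => ?_)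
    have hu0 : b₀ < u := hu
    have h1 : (1:ℝ) ≤ u + t := by linarith
    have h2 : (u + t) ^ (-(1:ℝ)/2) ≤ 1 :=
      Real.rpow_le_one_of_one_le_of_nonpos h1 (by norm_num)
    rw [Real.norm_eq_abs, Real.norm_eq_abs,
      abs_of_nonneg (mul_nonneg (hμpos u) (rpow_negHalf_nonneg _)),
      abs_of_nonneg (mul_nonneg (hμpos u) (by positivity))]
    calc μ u * (u + t) ^ (-(1:ℝ)/2) ≤ μ u * 1 :=
          mul_le_mul_of_nonneg_left h2 (hμpos u)
      _ ≤ μ u * (1 + Real.sqrt u) := by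
          nlinarith [Real.sqrt_nonneg u, hμpos u]

lemma stepC (u c₁ c₂ : ℝ) :
    ∫ t in c₁..c₂, (u+t) ^ (-(1:ℝ)/2) = 2 * (Real.sqrt (u+c₂) - Real.sqrt (u+c₁)) := by
  rw [intervalIntegral.integral_comp_add_left (fun x => x ^ (-(1:ℝ)/2)) u]
  rw [integral_rpow (Or.inl (by norm_num))]
  rw [show -(1:ℝ)/2 + 1 = 1/2 by norm_num]
  rw [← Real.sqrt_eq_rpow, ← Real.sqrt_eq_rpow]
  ring

lemma slice_int (u c₁ c₂ : ℝ) :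
    Integrable (fun t => μ u * (u + t) ^ (-(1:ℝ)/2)) (volume.restrict (Ioc c₁ c₂)) := by
  rcases le_total c₁ c₂ with h | h
  · have h1 : IntervalIntegrable (fun x : ℝ => x ^ (-(1:ℝ)/2)) volume (u + c₁) (u + c₂) :=
      intervalIntegral.intervalIntegrable_rpow' (by norm_num)
    have h2 := h1.comp_add_left u
    rw [add_sub_cancel_left, add_sub_cancel_left] at h2
    exact ((intervalIntegrable_iff_integrableOn_Ioc_of_le h).mp h2).const_mul _
  · rw [Ioc_eq_empty (by exact fun hlt => absurd h (not_le.mpr hlt)), Measure.restrict_empty]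
    exact integrable_zero_measure

lemma stepD (hμc : Continuous μ) (hμpos : ∀ r, 0 ≤ μ r)
    (hμint : IntegrableOn (fun r => μ r * (1 + Real.sqrt r)) (Set.Ioi (0:ℝ)))
    {c₁ c₂ : ℝ} (h : c₁ ≤ c₂) :
    (∫ u, μ u * Real.sqrt (u + c₂)) - (∫ u, μ u * Real.sqrt (u + c₁))
      = ∫ t in c₁..c₂, (1/2) * ∫ u, μ u * (u + t) ^ (-(1:ℝ)/2) := by
  have hmeas : AEStronglyMeasurable (fun p : ℝ × ℝ => μ p.1 * (p.1 + p.2) ^ (-(1:ℝ)/2))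
      (volume.prod (volume.restrict (Ioc c₁ c₂))) := by
    apply Measurable.aestronglyMeasurable
    refine (hμc.measurable.comp measurable_fst).mul ?_
    simp only [rpow_negHalf_eq]
    exact ((Real.continuous_sqrt.comp (continuous_fst.add continuous_snd)).measurable).inv
  have hC : ∀ u, ∫ t in Ioc c₁ c₂, μ u * (u + t) ^ (-(1:ℝ)/2)
      = 2 * (μ u * Real.sqrt (u + c₂)) - 2 * (μ u * Real.sqrt (u + c₁)) := by
    intro u
    rw [← intervalIntegral.integral_of_le h, intervalIntegral.integral_const_mul, stepC]
    ring
  have hprod : Integrable (fun p : ℝ × ℝ => μ p.1 * (p.1 + p.2) ^ (-(1:ℝ)/2))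
      (volume.prod (volume.restrict (Ioc c₁ c₂))) := by
    refine (integrable_prod_iff hmeas).mpr ⟨ae_of_all _ fun u => slice_int u c₁ c₂, ?_⟩
    have heq : (fun u => ∫ t in Ioc c₁ c₂, ‖μ u * (u + t) ^ (-(1:ℝ)/2)‖)
        = fun u => 2 * (μ u * Real.sqrt (u + c₂)) - 2 * (μ u * Real.sqrt (u + c₁)) := by
      funext u
      rw [← hC u]
      congr 1
      funext t
      rw [Real.norm_eq_abs, abs_of_nonneg (mul_nonneg (hμpos u) (rpow_negHalf_nonneg _))]
    rw [heq]
    exact (((int_sqrt hμc hμpos hμint c₂).const_mul 2).sub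
      (((int_sqrt hμc hμpos hμint c₁)).const_mul 2))
  calc (∫ u, μ u * Real.sqrt (u + c₂)) - (∫ u, μ u * Real.sqrt (u + c₁))
      = ∫ u, (2⁻¹ * (2 * (μ u * Real.sqrt (u + c₂)) - 2 * (μ u * Real.sqrt (u + c₁)))) := by
        rw [integral_const_mul, integral_sub (((int_sqrt hμc hμpos hμint c₂).const_mul 2))
          (((int_sqrt hμc hμpos hμint c₁).const_mul 2)), integral_const_mul, integral_const_mul]
        ring
    _ = ∫ u, ∫ t in Ioc c₁ c₂, 2⁻¹ * (μ u * (u + t) ^ (-(1:ℝ)/2)) := by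
        congr 1; funext u
        rw [integral_const_mul, hC u]
    _ = ∫ t in Ioc c₁ c₂, ∫ u, 2⁻¹ * (μ u * (u + t) ^ (-(1:ℝ)/2)) := by
        apply integral_integral_swap
        exact hprod.const_mul _
    _ = ∫ t in c₁..c₂, (1/2) * ∫ u, μ u * (u + t) ^ (-(1:ℝ)/2) := by
        rw [intervalIntegral.integral_of_le h]
        congr 1; funext t
        rw [integral_const_mul]
        norm_num

lemma phi_cont (hμc : Continuous μ) (hμpos : ∀ r, 0 ≤ μ r)
    (hμint : IntegrableOn (fun r => μ r * (1 + Real.sqrt r)) (Set.Ioi (0:ℝ))) :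
    Continuous (fun t => ∫ u, μ u * (u + t) ^ (-(1:ℝ)/2)) := by
  rw [continuous_iff_continuousAt]
  intro b
  set B : ℝ := max (1 - b) 1 with hB
  have hB1 : (1:ℝ) ≤ B := le_max_right _ _
  have hBb : (1:ℝ) ≤ B + b := by have := le_max_left (1-b) 1; simp only [hB]; linarith
  have hsplit : (fun t => ∫ u, μ u * (u + t) ^ (-(1:ℝ)/2))
      = (fun t => ∫ u in Iic B, μ u * (u + t) ^ (-(1:ℝ)/2))
        + (fun t => ∫ u in Ioi B, μ u * (u + t) ^ (-(1:ℝ)/2)) := by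
    funext t
    exact (intervalIntegral.integral_Iic_add_Ioi (int_rpow hμc hμpos hμint t).integrableOn
      (int_rpow hμc hμpos hμint t).integrableOn).symm
  rw [hsplit]
  apply ContinuousAt.add
  · obtain ⟨M, hM⟩ := (isCompact_Icc (a := -b-1) (b := B)).exists_bound_of_continuousOn
      hμc.continuousOn
    set M' : ℝ := max M 0 with hM'
    set indF : ℝ → ℝ → ℝ :=
      fun t s => (Ioc (0:ℝ) (B+t)).indicator (fun s => μ (s - t) * s ^ (-(1:ℝ)/2)) s with hindF
    have hrep : ∀ t : ℝ, -B < t →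
        (∫ u in Iic B, μ u * (u + t) ^ (-(1:ℝ)/2)) = ∫ s, indF t s := by
      intro t ht
      have htB : -t ≤ B := by linarith
      rw [← Iic_union_Ioc_eq_Iic htB,
        setIntegral_union (Iic_disjoint_Ioc le_rfl) measurableSet_Ioc
          (int_rpow hμc hμpos hμint t).integrableOn (int_rpow hμc hμpos hμint t).integrableOn]
      have h0 : (∫ u in Iic (-t), μ u * (u + t) ^ (-(1:ℝ)/2)) = 0 := by
        rw [setIntegral_congr_fun measurableSet_Iic (g := fun _ => (0:ℝ))
          (fun u hu => by
            have : u + t ≤ 0 := by simp only [mem_Iic] at hu; linarith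
            simp [rpow_negHalf_nonpos this])]
        simp
      rw [h0, zero_add]
      have := shift_Ioc (fun s => μ (s - t) * s ^ (-(1:ℝ)/2)) (-t) B t
      simp only [neg_add_cancel] at this
      rw [show (∫ u in Ioc (-t) B, μ u * (u + t) ^ (-(1:ℝ)/2))
          = ∫ u in Ioc (-t) B, (fun s => μ (s - t) * s ^ (-(1:ℝ)/2)) (u + t) from by
            congr 1; funext u; simp, this, ← integral_indicator measurableSet_Ioc]
    have hcont2 : ContinuousAt (fun t => ∫ s, indF t s) b := by
      apply continuousAt_of_dominated (bound := (Ioc (0:ℝ) (B+b+1)).indicator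
        (fun s => M' * s ^ (-(1:ℝ)/2)))
      · refine Filter.Eventually.of_forall fun t => ?_
        apply Measurable.aestronglyMeasurable
        apply Measurable.indicator _ measurableSet_Ioc
        refine (hμc.measurable.comp (measurable_id.sub_const t)).mul ?_
        simpa using meas_rpowNegHalf 0
      · have hev : ∀ᶠ t in nhds b, |t - b| < 2⁻¹ := by
          have : Metric.ball b 2⁻¹ ∈ nhds b := Metric.ball_mem_nhds b (by norm_num)
          exact Filter.eventually_iff_exists_mem.mpr ⟨_, this, fun t ht => by
            simpa [Real.dist_eq] using ht⟩
        refine hev.mono fun t ht => ae_of_all _ fun s => ?_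
        rcases em (s ∈ Ioc (0:ℝ) (B+t)) with hs | hs
        · have h1 : s ∈ Ioc (0:ℝ) (B+b+1) := by
            constructor
            · exact hs.1
            · have := abs_lt.mp ht; linarith [hs.2]
          rw [hindF]
          simp only [indicator_of_mem hs, indicator_of_mem h1]
          have h2 : μ (s - t) ≤ M' := by
            have hmem : s - t ∈ Icc (-b-1) B := by
              have := abs_lt.mp ht
              constructor
              · have := hs.1; linarith
              · have := hs.2; linarith
            calc μ (s-t) ≤ |μ (s-t)| := le_abs_self _
              _ ≤ M := by have := hM _ hmem; rwa [Real.norm_eq_abs] at this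
              _ ≤ M' := le_max_left _ _
          rw [Real.norm_eq_abs, abs_of_nonneg (mul_nonneg (hμpos _) (rpow_negHalf_nonneg _))]
          exact mul_le_mul_of_nonneg_right h2 (rpow_negHalf_nonneg _)
        · rw [hindF]
          simp only [indicator_of_notMem hs, norm_zero]
          apply indicator_nonneg
          intro s _
          exact mul_nonneg (le_max_right _ _) (rpow_negHalf_nonneg _)
      · rw [integrable_indicator_iff measurableSet_Ioc]
        have h1 : IntervalIntegrable (fun x : ℝ => x ^ (-(1:ℝ)/2)) volume 0 (B+b+1) :=
          intervalIntegral.intervalIntegrable_rpow' (by norm_num)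
        exact ((intervalIntegrable_iff_integrableOn_Ioc_of_le (by linarith)).mp h1).const_mul _
      · have hae : ∀ᵐ s : ℝ, s ≠ B + b := by
          have h0 : volume ({B + b} : Set ℝ) = 0 := measure_singleton _
          filter_upwards [compl_mem_ae_iff.mpr h0] with s hs
          simpa using hs
        refine hae.mono fun s hs => ?_
        rcases le_or_gt s 0 with h0 | h0
        · have : (fun t => indF t s) = fun _ => 0 := by
            funext t
            exact indicator_of_notMem (fun hmem => absurd hmem.1 (not_lt.mpr h0)) _
          rw [this]; exact continuousAt_const
        rcases lt_or_gt_of_ne hs with hlt | hgt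
        · have hev : ∀ᶠ t in nhds b, s < B + t := by
            have htend : Filter.Tendsto (fun t : ℝ => B + t) (nhds b) (nhds (B + b)) :=
              (continuous_const.add continuous_id).continuousAt
            exact htend.eventually (eventually_gt_nhds hlt)
          have hc : ContinuousAt (fun t => μ (s - t) * s ^ (-(1:ℝ)/2)) b :=
            ((hμc.comp (continuous_const.sub continuous_id)).continuousAt).mul continuousAt_const
          apply hc.congr
          refine hev.mono fun t ht => ?_
          exact (indicator_of_mem (show s ∈ Ioc (0:ℝ) (B+t) from ⟨h0, ht.le⟩)
            (fun s => μ (s - t) * s ^ (-(1:ℝ)/2))).symm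
        · have hev : ∀ᶠ t in nhds b, B + t < s := by
            have htend : Filter.Tendsto (fun t : ℝ => B + t) (nhds b) (nhds (B + b)) :=
              (continuous_const.add continuous_id).continuousAt
            exact htend.eventually (eventually_lt_nhds hgt)
          apply continuousAt_const.congr
          refine hev.mono fun t ht => ?_
          exact (indicator_of_notMem (fun hmem => absurd hmem.2 (not_le.mpr ht)) _).symm
    apply hcont2.congr
    have hev : ∀ᶠ t in nhds b, -B < t := by
      have : Filter.Tendsto (fun t : ℝ => t) (nhds b) (nhds b) := Filter.tendsto_id
      exact this.eventually (eventually_gt_nhds (by linarith : -B < b))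
    exact hev.mono fun t ht => (hrep t ht).symm
  · apply continuousAt_of_dominated (bound := fun u => Real.sqrt 2 * (μ u * (1 + Real.sqrt u)))
    · exact Filter.Eventually.of_forall fun t =>
        ((hμc.measurable.mul (meas_rpowNegHalf t)).aestronglyMeasurable).restrict
    · have hev : ∀ᶠ t in nhds b, |t - b| < 2⁻¹ := by
        have : Metric.ball b 2⁻¹ ∈ nhds b := Metric.ball_mem_nhds b (by norm_num)
        exact Filter.eventually_iff_exists_mem.mpr ⟨_, this, fun t ht => by
          simpa [Real.dist_eq] using ht⟩
      refine hev.mono fun t ht => ?_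
      refine (ae_restrict_iff' measurableSet_Ioi).mpr (ae_of_all _ fun u hu => ?_)
      have hu' : B < u := hu
      have h1 : (2:ℝ)⁻¹ ≤ u + t := by
        have habs := abs_lt.mp ht
        have h2 : 1 - b ≤ B := le_max_left _ _
        linarith [habs.1]
      have h2 : (u + t) ^ (-(1:ℝ)/2) ≤ Real.sqrt 2 := by
        rw [rpow_negHalf_eq]
        have h3 : Real.sqrt 2⁻¹ ≤ Real.sqrt (u + t) := Real.sqrt_le_sqrt h1
        have h4 : (0:ℝ) < Real.sqrt 2⁻¹ := Real.sqrt_pos.mpr (by norm_num)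
        calc (Real.sqrt (u+t))⁻¹ ≤ (Real.sqrt 2⁻¹)⁻¹ := by
              apply inv_anti₀ h4 h3
          _ = Real.sqrt 2 := by rw [Real.sqrt_inv, inv_inv]
      rw [Real.norm_eq_abs, abs_of_nonneg (mul_nonneg (hμpos u) (rpow_negHalf_nonneg _))]
      have h5 : μ u * (u + t) ^ (-(1:ℝ)/2) ≤ μ u * Real.sqrt 2 :=
        mul_le_mul_of_nonneg_left h2 (hμpos u)
      have h6 : μ u * Real.sqrt 2 ≤ Real.sqrt 2 * (μ u * (1 + Real.sqrt u)) := by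
        nlinarith [mul_nonneg (mul_nonneg (Real.sqrt_nonneg 2) (hμpos u)) (Real.sqrt_nonneg u),
          Real.sqrt_nonneg 2, hμpos u]
      linarith
    · exact ((hμint.mono_set (Ioi_subset_Ioi (by linarith : (0:ℝ) ≤ B))).const_mul _)
    · refine (ae_restrict_iff' measurableSet_Ioi).mpr (ae_of_all _ fun u hu => ?_)
      have hu' : B < u := hu
      have hpos : 0 < u + b := by linarith
      have : ContinuousAt (fun t => μ u * (Real.sqrt (u + t))⁻¹) b := by
        refine continuousAt_const.mul (ContinuousAt.inv₀ ?_ ?_)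
        · exact (Real.continuous_sqrt.comp (continuous_const.add continuous_id)).continuousAt
        · exact ne_of_gt (Real.sqrt_pos.mpr hpos)
      simpa only [rpow_negHalf_eq] using this

end Stmt7Aux

open Stmt7Aux Set

/-- If `μ : ℝ → ℝ` is continuous, nonnegative, with `∫₀^∞ μ(r)(1 + √r) dr < ∞`, then
`G(β) = ∫_{ℝ³} μ(|v|²/2 − β) dv` is differentiable with
`G′(β) = 2√2 π ∫_{−β}^∞ μ(u)(u+β)^{−1/2} du ≥ 0`; in particular `g(β) = 1 − G(β)` has
`g′(β) ≤ 0` for all `β`. -/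
theorem stmt_7 (μ : ℝ → ℝ) (hμc : Continuous μ) (hμpos : ∀ r, 0 ≤ μ r)
    (hμint : IntegrableOn (fun r => μ r * (1 + Real.sqrt r)) (Set.Ioi (0 : ℝ))) :
    ∀ b : ℝ,
      HasDerivAt (fun c : ℝ => ∫ v : EuclideanSpace ℝ (Fin 3), μ (‖v‖ ^ 2 / 2 - c))
        (2 * Real.sqrt 2 * π * ∫ u in Set.Ioi (-b), μ u * (u + b) ^ (-(1 : ℝ) / 2)) b ∧
      0 ≤ 2 * Real.sqrt 2 * π * ∫ u in Set.Ioi (-b), μ u * (u + b) ^ (-(1 : ℝ) / 2) ∧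
      deriv (fun c : ℝ => 1 - ∫ v : EuclideanSpace ℝ (Fin 3), μ (‖v‖ ^ 2 / 2 - c)) b ≤ 0 := by
  intro b
  have hφc : Continuous (fun t => ∫ u, μ u * (u + t) ^ (-(1:ℝ)/2)) :=
    phi_cont hμc hμpos hμint
  -- value identification
  have hval : ∫ u in Set.Ioi (-b), μ u * (u + b) ^ (-(1:ℝ)/2)
      = ∫ u, μ u * (u + b) ^ (-(1:ℝ)/2) := by
    apply setIntegral_eq_integral_of_forall_compl_eq_zero
    intro u hu
    have : u + b ≤ 0 := by simp only [mem_Ioi, not_lt] at hu; linarith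
    rw [rpow_negHalf_nonpos this, mul_zero]
  have hrepr : ∀ c : ℝ, (∫ u, μ u * Real.sqrt (u + c))
      = (∫ u, μ u * Real.sqrt (u + (b-1)))
        + ∫ t in (b-1)..c, (1/2) * ∫ u, μ u * (u + t) ^ (-(1:ℝ)/2) := by
    intro c
    rcases le_total (b-1) c with h | h
    · have := stepD hμc hμpos hμint h
      linarith
    · have h2 := stepD hμc hμpos hμint h
      rw [intervalIntegral.integral_symm]
      linarith
  have hderiv0 : HasDerivAt
      (fun c => ∫ t in (b-1)..c, (1/2) * ∫ u, μ u * (u + t) ^ (-(1:ℝ)/2))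
      ((1/2) * ∫ u, μ u * (u + b) ^ (-(1:ℝ)/2)) b := by
    apply intervalIntegral.integral_hasDerivAt_right
    · exact (continuous_const.mul hφc).intervalIntegrable _ _
    · exact (continuous_const.mul hφc).stronglyMeasurableAtFilter _ _
    · exact (continuous_const.mul hφc).continuousAt
  have hF : HasDerivAt (fun c => ∫ u, μ u * Real.sqrt (u + c))
      ((1/2) * ∫ u, μ u * (u + b) ^ (-(1:ℝ)/2)) b := by
    have heq : (fun c => ∫ u, μ u * Real.sqrt (u + c))
        = fun c => (∫ u, μ u * Real.sqrt (u + (b-1)))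
          + ∫ t in (b-1)..c, (1/2) * ∫ u, μ u * (u + t) ^ (-(1:ℝ)/2) := funext hrepr
    rw [heq]
    exact hderiv0.const_add _
  have hG : HasDerivAt (fun c : ℝ => ∫ v : EuclideanSpace ℝ (Fin 3), μ (‖v‖ ^ 2 / 2 - c))
      (2 * Real.sqrt 2 * π * ∫ u in Set.Ioi (-b), μ u * (u + b) ^ (-(1:ℝ) / 2)) b := by
    have heq : (fun c : ℝ => ∫ v : EuclideanSpace ℝ (Fin 3), μ (‖v‖ ^ 2 / 2 - c))
        = fun c => (4 * Real.sqrt 2 * π) * ∫ u, μ u * Real.sqrt (u + c) :=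
      funext (stepA hμc)
    rw [heq]
    have := hF.const_mul (4 * Real.sqrt 2 * π)
    refine this.congr_deriv ?_
    rw [hval]
    ring
  have hnn : 0 ≤ 2 * Real.sqrt 2 * π * ∫ u in Set.Ioi (-b), μ u * (u + b) ^ (-(1:ℝ)/2) := by
    apply mul_nonneg
    · positivity
    · exact setIntegral_nonneg measurableSet_Ioi fun u _ =>
        mul_nonneg (hμpos u) (rpow_negHalf_nonneg _)
  refine ⟨hG, hnn, ?_⟩
  have hg : HasDerivAt (fun c : ℝ => 1 - ∫ v : EuclideanSpace ℝ (Fin 3), μ (‖v‖ ^ 2 / 2 - c))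
      (0 - (2 * Real.sqrt 2 * π * ∫ u in Set.Ioi (-b), μ u * (u + b) ^ (-(1:ℝ)/2))) b :=
    (hasDerivAt_const b 1).sub hG
  rw [hg.deriv]
  linarith
end
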